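/- arXiv:1203.1336 — 4 statements merged into one kernel-verified Lean document; each statement's English description precedes it below -/
import Mathlib

section
/- Let α, Δ be positive integers and let G be a finite simple graph with maximum degree at most Δ and independence number at most α. Then the number of edges of G is at most α·(Δ+1 choose 2), and equality holds if and only if G is isomorphic to F_{α,Δ}, the graph consisting of α disjoint copies of the complete graph K_{Δ+1}. -/
/-- The number of edges of a simple graph. -/
noncomputable def edgeCount {V : Type*} (G : SimpleGraph V) : ℕ := G.edgeSet.ncard

/-- The independence number: largest size of a set of pairwise nonadjacent vertices. -/
noncomputable def indNum {V : Type*} (G : SimpleGraph V) : ℕ :=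
  sSup {n | ∃ s : Finset V, (∀ x ∈ s, ∀ y ∈ s, ¬ G.Adj x y) ∧ s.card = n}

/-- A finite set of edges of `G` forming a matching (pairwise vertex-disjoint edges). -/
def IsMatchingFinset {V : Type*} (G : SimpleGraph V) (m : Finset (Sym2 V)) : Prop :=
  ↑m ⊆ G.edgeSet ∧ ∀ e ∈ m, ∀ f ∈ m, e ≠ f → ∀ v : V, ¬(v ∈ e ∧ v ∈ f)

/-- The matching number: largest size of a matching. -/
noncomputable def matNum {V : Type*} (G : SimpleGraph V) : ℕ :=
  sSup {n | ∃ m : Finset (Sym2 V), IsMatchingFinset G m ∧ m.card = n}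

/-- The maximum degree. -/
noncomputable def maxDeg {V : Type*} (G : SimpleGraph V) : ℕ :=
  ⨆ v, (G.neighborSet v).ncard

/-- `Gext α ν`: disjoint union of `K_{2ν+1}` with `α - 1` isolated vertices. -/
def Gext (α ν : ℕ) : SimpleGraph (Fin (2*ν+1) ⊕ Fin (α-1)) :=
  SimpleGraph.fromRel (fun x y => x.isLeft = true ∧ y.isLeft = true)

/-- `Hext α ν`: the complete split graph: clique of size `ν` joined to an
independent set of size `α`. -/
def Hext (α ν : ℕ) : SimpleGraph (Fin ν ⊕ Fin α) :=
  SimpleGraph.fromRel (fun x _ => x.isLeft = true)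

/-- `Fext α Δ`: disjoint union of `α` copies of `K_{Δ+1}`. -/
def Fext (α Δ : ℕ) : SimpleGraph (Fin α × Fin (Δ+1)) :=
  SimpleGraph.fromRel (fun x y => x.1 = y.1)

/-- `Jgraph Δ`: for even `Δ` this is `K_{Δ+1}`; for odd `Δ = 2j-1` it is `K_{2j}`
minus a perfect matching (vertices `2k, 2k+1` are nonadjacent) together with an extra
vertex (the last one) joined to all but one (vertex `0`) of the other vertices. -/
def Jgraph (Δ : ℕ) : SimpleGraph (Fin (2*((Δ+1)/2)+1)) :=
  SimpleGraph.fromRel (fun x y =>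
    if Δ % 2 = 0 then True
    else (x.val < 2*((Δ+1)/2) ∧ y.val < 2*((Δ+1)/2) ∧ x.val/2 ≠ y.val/2) ∨
         (x.val = 2*((Δ+1)/2) ∧ 0 < y.val ∧ y.val < 2*((Δ+1)/2)))

/-- `G` is edge-extremal for `(α, ν)`: it has independence number `α`, matching number `ν`,
and the maximum number of edges among all finite simple graphs with independence number `α`
and matching number `ν`. -/
def EdgeExtremal {V : Type*} [Fintype V] (G : SimpleGraph V) (α ν : ℕ) : Prop :=
  indNum G = α ∧ matNum G = ν ∧
    ∀ (W : Type) [Fintype W] (H : SimpleGraph W),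
      indNum H = α → matNum H = ν → edgeCount H ≤ edgeCount G

set_option linter.unusedSectionVars false

open Finset SimpleGraph

section Aux
variable {V : Type*} [Fintype V] [DecidableEq V] (G : SimpleGraph V) [DecidableRel G.Adj]

lemma edgeCount_eq_card : edgeCount G = G.edgeFinset.card := by
  rw [edgeCount, ← coe_edgeFinset, Set.ncard_coe_finset]

lemma ncard_neighborSet (v : V) : (G.neighborSet v).ncard = G.degree v := by
  rw [Set.ncard_eq_toFinset_card', ← neighborFinset_def]; rfl

lemma degree_le_of_maxDeg {Δ : ℕ} (h : maxDeg G ≤ Δ) (v : V) : G.degree v ≤ Δ := by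
  have h2 : (G.neighborSet v).ncard ≤ maxDeg G := by
    rw [maxDeg]
    exact le_ciSup (f := fun v => (G.neighborSet v).ncard) (Set.Finite.bddAbove (Set.finite_range _)) v
  rw [ncard_neighborSet] at h2
  exact h2.trans h

lemma card_le_indNum {s : Finset V} (hs : ∀ x ∈ s, ∀ y ∈ s, ¬ G.Adj x y) :
    s.card ≤ indNum G :=
  le_csSup ⟨Fintype.card V, by rintro n ⟨t, -, rfl⟩; exact t.card_le_univ⟩ ⟨s, hs, rfl⟩

end Aux

lemma edgeCount_congr {V W : Type*} {G : SimpleGraph V} {H : SimpleGraph W}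
    (e : G ≃g H) : edgeCount G = edgeCount H := by
  rw [edgeCount, edgeCount, ← Nat.card_coe_set_eq, ← Nat.card_coe_set_eq]
  exact Nat.card_congr e.mapEdgeSet

lemma two_mul_choose_two (Δ : ℕ) : 2 * (Δ + 1).choose 2 = (Δ + 1) * Δ := by
  rw [Nat.choose_two_right, Nat.succ_sub_one, Nat.mul_div_cancel']
  rw [mul_comm]; exact (Nat.even_mul_succ_self Δ).two_dvd

lemma fext_adj (α Δ : ℕ) (x y : Fin α × Fin (Δ+1)) :
    (Fext α Δ).Adj x y ↔ x ≠ y ∧ x.1 = y.1 := by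
  simp only [Fext, SimpleGraph.fromRel_adj]
  constructor
  · rintro ⟨h, h2 | h2⟩
    exacts [⟨h, h2⟩, ⟨h, h2.symm⟩]
  · rintro ⟨h, h2⟩; exact ⟨h, Or.inl h2⟩

lemma edgeCount_Fext (α Δ : ℕ) : edgeCount (Fext α Δ) = α * (Δ + 1).choose 2 := by
  classical
  have hdeg : ∀ x : Fin α × Fin (Δ+1), (Fext α Δ).degree x = Δ := by
    intro ⟨i, j⟩
    have hnb : (Fext α Δ).neighborFinset (i, j) = {i} ×ˢ ({j}ᶜ : Finset (Fin (Δ+1))) := by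
      ext x
      simp only [mem_neighborFinset, fext_adj, mem_product, mem_singleton, mem_compl]
      constructor
      · rintro ⟨hne, h1⟩
        exact ⟨h1.symm, fun hl => hne (Prod.ext h1 hl.symm)⟩
      · rintro ⟨h1, h2⟩
        exact ⟨fun h => h2 (congrArg Prod.snd h).symm, h1.symm⟩
    show ((Fext α Δ).neighborFinset (i, j)).card = Δ
    rw [hnb, card_product, card_singleton, card_compl, card_singleton, Fintype.card_fin,
      one_mul, Nat.add_sub_cancel]
  have h2 : 2 * (Fext α Δ).edgeFinset.card = 2 * (α * (Δ+1).choose 2) := by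
    rw [← SimpleGraph.sum_degrees_eq_twice_card_edges]
    simp only [hdeg, Finset.sum_const, Finset.card_univ, smul_eq_mul]
    rw [Fintype.card_prod, Fintype.card_fin, Fintype.card_fin]
    rw [show 2 * (α * (Δ+1).choose 2) = α * (2 * (Δ+1).choose 2) by ring, two_mul_choose_two]
    ring
  exact (edgeCount_eq_card _).trans (Nat.eq_of_mul_eq_mul_left two_pos h2)

/-- If `Δ(G) ≤ Δ` and `α(G) ≤ α` then `|E(G)| ≤ α * C(Δ+1, 2)`,
with equality iff `G` is the disjoint union of `α` copies of `K_{Δ+1}`. -/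
theorem maxEdges_of_indep_and_maxDegree (α Δ : ℕ) (hα : 0 < α) (hΔ : 0 < Δ)
    {V : Type*} [Fintype V] (G : SimpleGraph V)
    (hdeg : maxDeg G ≤ Δ) (hind : indNum G ≤ α) :
    edgeCount G ≤ α * (Δ + 1).choose 2 ∧
      (edgeCount G = α * (Δ + 1).choose 2 ↔ Nonempty (G ≃g Fext α Δ)) := by
  classical
  set n := Fintype.card V with hn
  -- a maximum independent set S
  have h𝒮 : (Finset.univ.filter
      (fun s : Finset V => ∀ x ∈ s, ∀ y ∈ s, ¬ G.Adj x y)).Nonempty :=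
    ⟨∅, by simp⟩
  obtain ⟨S, hSmem, hSmax⟩ := Finset.exists_max_image _ Finset.card h𝒮
  have hSind : ∀ x ∈ S, ∀ y ∈ S, ¬ G.Adj x y := (Finset.mem_filter.1 hSmem).2
  set Nc : V → Finset V := fun s => insert s (G.neighborFinset s) with hNcdef
  have hself : ∀ s, s ∈ Nc s := fun s => mem_insert_self _ _
  have hmemNc : ∀ s v, v ∈ Nc s ↔ v = s ∨ G.Adj s v := by
    intro s v; simp [Nc]
  have hcover : ∀ v : V, ∃ s ∈ S, v ∈ Nc s := by
    intro v
    by_cases hv : v ∈ S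
    · exact ⟨v, hv, hself v⟩
    · by_contra hno
      push_neg at hno
      have hins : ∀ x ∈ insert v S, ∀ y ∈ insert v S, ¬ G.Adj x y := by
        intro x hx y hy hadj
        rcases mem_insert.1 hx with rfl | hx' <;> rcases mem_insert.1 hy with rfl | hy'
        · exact G.irrefl hadj
        · exact hno y hy' ((hmemNc y x).2 (Or.inr hadj.symm))
        · exact hno x hx' ((hmemNc x y).2 (Or.inr hadj))
        · exact hSind x hx' y hy' hadj
      have hle := hSmax _ (mem_filter.2 ⟨mem_univ _, hins⟩)
      rw [card_insert_of_notMem hv] at hle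
      omega
  have hdegv : ∀ v, G.degree v ≤ Δ := degree_le_of_maxDeg G hdeg
  have hNcCard : ∀ v, (Nc v).card = G.degree v + 1 := by
    intro v
    rw [show Nc v = insert v (G.neighborFinset v) from rfl,
      card_insert_of_notMem (by simp)]
    rfl
  have hSα : S.card ≤ α := le_trans (card_le_indNum G hSind) hind
  have hnle : n ≤ S.card * (Δ + 1) := by
    calc n = (univ : Finset V).card := card_univ.symm
      _ ≤ (S.biUnion Nc).card :=
          card_le_card (fun v _ => mem_biUnion.2 (hcover v))
      _ ≤ ∑ s ∈ S, (Nc s).card := card_biUnion_le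
      _ ≤ S.card * (Δ + 1) := by
          rw [← smul_eq_mul]
          exact sum_le_card_nsmul _ _ _
            (fun s _ => by rw [hNcCard]; have := hdegv s; omega)
  have hsumdeg : ∑ v, G.degree v ≤ n * Δ := by
    rw [hn, ← card_univ, ← smul_eq_mul]
    exact sum_le_card_nsmul _ _ _ (fun v _ => hdegv v)
  have hhs : ∑ v, G.degree v = 2 * edgeCount G := by
    rw [edgeCount_eq_card, SimpleGraph.sum_degrees_eq_twice_card_edges]
  have hbound : 2 * edgeCount G ≤ 2 * (α * (Δ + 1).choose 2) := by
    calc 2 * edgeCount G = ∑ v, G.degree v := hhs.symm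
      _ ≤ n * Δ := hsumdeg
      _ ≤ (S.card * (Δ + 1)) * Δ := Nat.mul_le_mul_right _ hnle
      _ ≤ (α * (Δ + 1)) * Δ := Nat.mul_le_mul_right _ (Nat.mul_le_mul_right _ hSα)
      _ = 2 * (α * (Δ + 1).choose 2) := by
          rw [show 2 * (α * (Δ + 1).choose 2) = α * (2 * (Δ + 1).choose 2) by ring,
            two_mul_choose_two]; ring
  have hle : edgeCount G ≤ α * (Δ + 1).choose 2 := Nat.le_of_mul_le_mul_left hbound two_pos
  refine ⟨hle, ?_, ?_⟩
  swap
  · rintro ⟨e⟩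
    rw [edgeCount_congr e, edgeCount_Fext]
  intro heq
  -- all inequalities in the chain are equalities
  have e0 : ∑ v, G.degree v = α * ((Δ + 1) * Δ) := by
    rw [hhs, heq, show 2 * (α * (Δ + 1).choose 2) = α * (2 * (Δ + 1).choose 2) by ring,
      two_mul_choose_two]
  have t1 : n * Δ ≤ S.card * ((Δ + 1) * Δ) := by
    rw [← mul_assoc]; exact Nat.mul_le_mul_right _ hnle
  have t2 : S.card * ((Δ + 1) * Δ) ≤ α * ((Δ + 1) * Δ) := Nat.mul_le_mul_right _ hSα
  have hA : ∑ v, G.degree v = n * Δ :=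
    le_antisymm hsumdeg (by rw [e0]; exact t1.trans t2)
  have hB : n * Δ = S.card * ((Δ + 1) * Δ) :=
    le_antisymm t1 (by
      calc S.card * ((Δ+1)*Δ) ≤ α * ((Δ+1)*Δ) := t2
        _ = ∑ v, G.degree v := e0.symm
        _ ≤ n * Δ := hsumdeg)
  have hC : S.card * ((Δ + 1) * Δ) = α * ((Δ + 1) * Δ) :=
    le_antisymm t2 (by
      calc α * ((Δ+1)*Δ) = ∑ v, G.degree v := e0.symm
        _ ≤ n * Δ := hsumdeg
        _ ≤ S.card * ((Δ+1)*Δ) := t1)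
  have hScard : S.card = α :=
    Nat.eq_of_mul_eq_mul_right (by positivity) hC
  have hn2 : n = S.card * (Δ + 1) := by
    have := hB; rw [← mul_assoc] at this
    exact Nat.eq_of_mul_eq_mul_right hΔ this
  -- all degrees equal Δ
  have hreg : ∀ v, G.degree v = Δ := by
    have hAB' : ∑ v, G.degree v = ∑ _v : V, Δ := by
      rw [sum_const, card_univ, smul_eq_mul, ← hn, hA]
    intro v
    exact (Finset.sum_eq_sum_iff_of_le (fun v _ => hdegv v)).1 hAB' v (mem_univ v)
  have hNcCardΔ : ∀ s, (Nc s).card = Δ + 1 := fun s => by rw [hNcCard s, hreg s]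
  -- each vertex lies in a unique closed neighborhood N[s], s ∈ S
  have hdouble : ∑ v : V, (S.filter (fun s => v ∈ Nc s)).card = ∑ s ∈ S, (Nc s).card := by
    have rhs : ∑ s ∈ S, (Nc s).card = ∑ s ∈ S, ∑ v : V, ite (v ∈ Nc s) 1 0 :=
      Finset.sum_congr rfl fun s _ => by rw [← card_filter, filter_univ_mem]
    rw [rhs, Finset.sum_comm]
    exact Finset.sum_congr rfl fun v _ => card_filter _ _
  have hone : ∀ v : V, 1 ≤ (S.filter (fun s => v ∈ Nc s)).card := by
    intro v
    obtain ⟨s, hs, hv⟩ := hcover v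
    exact card_pos.2 ⟨s, mem_filter.2 ⟨hs, hv⟩⟩
  have hcone : ∀ v : V, (S.filter (fun s => v ∈ Nc s)).card = 1 := by
    have hsum1 : ∑ _v : V, (1 : ℕ) = ∑ v : V, (S.filter (fun s => v ∈ Nc s)).card := by
      rw [sum_const, card_univ, smul_eq_mul, mul_one, hdouble]
      rw [Finset.sum_congr rfl (fun s _ => hNcCardΔ s), sum_const, smul_eq_mul, ← hn2]
    intro v
    exact ((Finset.sum_eq_sum_iff_of_le (fun v _ => hone v)).1 hsum1 v (mem_univ v)).symm
  have huniq : ∀ v : V, ∀ s ∈ S, v ∈ Nc s → ∀ t ∈ S, v ∈ Nc t → s = t := by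
    intro v s hs hvs t ht hvt
    obtain ⟨a, ha⟩ := card_eq_one.1 (hcone v)
    have h1 : s ∈ S.filter (fun s => v ∈ Nc s) := mem_filter.2 ⟨hs, hvs⟩
    have h2 : t ∈ S.filter (fun s => v ∈ Nc s) := mem_filter.2 ⟨ht, hvt⟩
    rw [ha, mem_singleton] at h1 h2
    rw [h1, h2]
  choose b hbS hbNc using hcover
  -- each closed neighborhood is a clique
  have hclique : ∀ s ∈ S, ∀ u ∈ Nc s, ∀ w ∈ Nc s, u ≠ w → G.Adj u w := by
    intro s hs u hu w hw huw
    rcases (hmemNc s u).1 hu with rfl | hu'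
    · rcases (hmemNc u w).1 hw with rfl | hw'
      · exact absurd rfl huw
      · exact hw'
    · rcases (hmemNc s w).1 hw with rfl | hw'
      · exact hu'.symm
      · by_contra hno
        have key : ∀ z, z ∈ Nc s → z ∉ S.erase s ∧ ∀ t ∈ S.erase s, ¬ G.Adj z t := by
          intro z hz
          constructor
          · intro hzS
            exact (ne_of_mem_erase hzS)
              (huniq z z (mem_of_mem_erase hzS) (hself z) s hs hz)
          · intro t ht hadj
            exact (ne_of_mem_erase ht)
              (huniq z t (mem_of_mem_erase ht) ((hmemNc t z).2 (Or.inr hadj.symm)) s hs hz)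
        obtain ⟨huS, huAdj⟩ := key u hu
        obtain ⟨hwS, hwAdj⟩ := key w hw
        have hTind : ∀ x ∈ insert u (insert w (S.erase s)),
            ∀ y ∈ insert u (insert w (S.erase s)), ¬ G.Adj x y := by
          intro x hx y hy hadj
          simp only [mem_insert] at hx hy
          rcases hx with rfl | rfl | hx <;> rcases hy with rfl | rfl | hy
          · exact G.irrefl hadj
          · exact hno hadj
          · exact huAdj y hy hadj
          · exact hno hadj.symm
          · exact G.irrefl hadj
          · exact hwAdj y hy hadj
          · exact huAdj x hx hadj.symm
          · exact hwAdj x hx hadj.symm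
          · exact hSind x (mem_of_mem_erase hx) y (mem_of_mem_erase hy) hadj
        have hunotmem : u ∉ insert w (S.erase s) := by
          simp only [mem_insert]
          rintro (rfl | h)
          · exact huw rfl
          · exact huS h
        have hTcard : (insert u (insert w (S.erase s))).card = S.card + 1 := by
          rw [card_insert_of_notMem hunotmem, card_insert_of_notMem hwS,
            card_erase_of_mem hs]
          have : 1 ≤ S.card := card_pos.2 ⟨s, hs⟩
          omega
        have hcontra : S.card + 1 ≤ α := by
          rw [← hTcard]
          exact le_trans (card_le_indNum G hTind) hind
        omega
  -- exact neighborhood structure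
  have hnb : ∀ v, G.neighborFinset v = (Nc (b v)).erase v := by
    intro v
    have hsub : (Nc (b v)).erase v ⊆ G.neighborFinset v := by
      intro x hx
      rw [mem_neighborFinset]
      exact hclique (b v) (hbS v) v (hbNc v) x (mem_of_mem_erase hx)
        (ne_of_mem_erase hx).symm
    refine (eq_of_subset_of_card_le hsub ?_).symm
    rw [card_erase_of_mem (hbNc v), hNcCardΔ]
    have h3 : (G.neighborFinset v).card = Δ := hreg v
    omega
  have hadj_iff : ∀ u v : V, G.Adj u v ↔ u ≠ v ∧ b u = b v := by
    intro u v
    constructor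
    · intro h
      refine ⟨h.ne, ?_⟩
      have hv : v ∈ Nc (b u) := by
        have : v ∈ G.neighborFinset u := (mem_neighborFinset _ _ _).2 h
        rw [hnb u] at this
        exact mem_of_mem_erase this
      exact huniq v (b u) (hbS u) hv (b v) (hbS v) (hbNc v)
    · rintro ⟨hne, hbuv⟩
      have hv : v ∈ Nc (b u) := by rw [hbuv]; exact hbNc v
      have hv2 : v ∈ (Nc (b u)).erase u := mem_erase.2 ⟨hne.symm, hv⟩
      rw [← hnb u, mem_neighborFinset] at hv2
      exact hv2
  -- build the isomorphism
  have hScard' : Fintype.card {x // x ∈ S} = α := by rw [Fintype.card_coe]; exact hScard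
  let e1 : {x // x ∈ S} ≃ Fin α := Fintype.equivFinOfCardEq hScard'
  let f : V → Fin α := fun v => e1 ⟨b v, hbS v⟩
  have hf : ∀ u v, f u = f v ↔ b u = b v := by
    intro u v
    constructor
    · intro h
      exact congrArg Subtype.val (e1.injective h)
    · intro h
      exact congrArg e1 (Subtype.ext h)
  have hfib : ∀ i, Fintype.card {v // f v = i} = Δ + 1 := by
    intro i
    have hbmem : ∀ v, f v = i ↔ v ∈ Nc ((e1.symm i : {x // x ∈ S}) : V) := by
      intro v
      constructor
      · intro h
        have h2 : (⟨b v, hbS v⟩ : {x // x ∈ S}) = e1.symm i := by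
          rw [← h]; exact (e1.symm_apply_apply _).symm
        have h3 : b v = ((e1.symm i : {x // x ∈ S}) : V) := congrArg Subtype.val h2
        rw [← h3]; exact hbNc v
      · intro h
        have h3 : b v = ((e1.symm i : {x // x ∈ S}) : V) :=
          huniq v (b v) (hbS v) (hbNc v) _ (e1.symm i).2 h
        show e1 ⟨b v, hbS v⟩ = i
        rw [show (⟨b v, hbS v⟩ : {x // x ∈ S}) = e1.symm i from Subtype.ext h3,
          e1.apply_symm_apply]
    rw [Fintype.card_congr (Equiv.subtypeEquivRight hbmem)]
    rw [Fintype.card_coe]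
    exact hNcCardΔ _
  let φ : V ≃ (Fin α × Fin (Δ + 1)) :=
    (Equiv.sigmaFiberEquiv f).symm.trans
      ((Equiv.sigmaCongrRight (fun i => Fintype.equivFinOfCardEq (hfib i))).trans
        (Equiv.sigmaEquivProd (Fin α) (Fin (Δ + 1))))
  have hφ1 : ∀ v, (φ v).1 = f v := fun v => rfl
  refine ⟨⟨φ, @fun u v => ?_⟩⟩
  rw [fext_adj, hadj_iff]
  constructor
  · rintro ⟨hne, h1⟩
    refine ⟨fun h => hne (congrArg φ h), (hf u v).1 ?_⟩
    rw [← hφ1 u, ← hφ1 v]; exact h1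
  · rintro ⟨hne, hbuv⟩
    exact ⟨fun h => hne (φ.injective h), (hf u v).2 hbuv⟩
end

section
/- Let α, ν be positive integers with α > 1, and let G be a finite simple graph with independence number α, matching number ν, and the maximum possible number of edges among all finite simple graphs with independence number α and matching number ν. Then G has at least 2ν+2 vertices. -/
lemma gext_adj {α ν : ℕ} (x y : Fin (2*ν+1) ⊕ Fin (α-1)) :
    (Gext α ν).Adj x y ↔ x ≠ y ∧ x.isLeft = true ∧ y.isLeft = true := by
  simp only [Gext, SimpleGraph.fromRel_adj]
  tauto

lemma indNum_Gext {α ν : ℕ} (hα : 1 < α) : indNum (Gext α ν) = α := by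
  classical
  set S := {n | ∃ s : Finset (Fin (2*ν+1) ⊕ Fin (α-1)),
      (∀ x ∈ s, ∀ y ∈ s, ¬ (Gext α ν).Adj x y) ∧ s.card = n} with hS
  have hmem : α ∈ S := by
    refine ⟨insert (Sum.inl 0) (Finset.univ.image Sum.inr), ?_, ?_⟩
    · intro x hx y hy hadj
      rw [gext_adj] at hadj
      simp only [Finset.mem_insert, Finset.mem_image, Finset.mem_univ, true_and] at hx hy
      rcases hx with rfl | ⟨a, rfl⟩
      · rcases hy with rfl | ⟨b, rfl⟩
        · exact hadj.1 rfl
        · simp at hadj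
      · simp at hadj
    · rw [Finset.card_insert_of_notMem (by simp),
        Finset.card_image_of_injective _ Sum.inr_injective, Finset.card_univ]
      simp only [Fintype.card_fin]
      omega
  have hub : ∀ n ∈ S, n ≤ α := by
    rintro n ⟨s, hs, rfl⟩
    have h1 : (s.filter (fun x => x.isLeft = true)).card ≤ 1 := by
      refine Finset.card_le_one.2 ?_
      intro x hx y hy
      by_contra hne
      simp only [Finset.mem_filter] at hx hy
      exact hs x hx.1 y hy.1 ((gext_adj x y).2 ⟨hne, hx.2, hy.2⟩)
    have h2 : (s.filter (fun x => ¬ x.isLeft = true)).card ≤ α - 1 := by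
      have hsub : (s.filter (fun x => ¬ x.isLeft = true)) ⊆ Finset.univ.image Sum.inr := by
        intro x hx
        simp only [Finset.mem_filter] at hx
        cases x with
        | inl a => simp at hx
        | inr b => simp
      calc (s.filter (fun x => ¬ x.isLeft = true)).card
          ≤ (Finset.univ.image (Sum.inr : Fin (α-1) → _)).card := Finset.card_le_card hsub
        _ = α - 1 := by
            rw [Finset.card_image_of_injective _ Sum.inr_injective, Finset.card_univ,
              Fintype.card_fin]
    have h3 := Finset.card_filter_add_card_filter_not
      (s := s) (p := fun x => x.isLeft = true)
    omega
  exact le_antisymm (csSup_le ⟨α, hmem⟩ hub) (le_csSup ⟨α, hub⟩ hmem)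

lemma gext_edge_left {α ν : ℕ} (e : Sym2 (Fin (2*ν+1) ⊕ Fin (α-1)))
    (he : e ∈ (Gext α ν).edgeSet) : ∀ v ∈ e, v.isLeft = true := by
  induction e using Sym2.ind with
  | _ a b =>
    intro v hv
    rw [SimpleGraph.mem_edgeSet, gext_adj] at he
    rw [Sym2.mem_iff] at hv
    rcases hv with rfl | rfl
    exacts [he.2.1, he.2.2]

lemma gext_edge_card {α ν : ℕ} (e : Sym2 (Fin (2*ν+1) ⊕ Fin (α-1)))
    (he : e ∈ (Gext α ν).edgeSet) :
    (Finset.univ.filter (fun v => v ∈ e)).card = 2 := by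
  induction e using Sym2.ind with
  | _ a b =>
    rw [SimpleGraph.mem_edgeSet, gext_adj] at he
    have h : (Finset.univ.filter (fun v => v ∈ s(a,b))) = {a, b} := by
      ext v; simp [Sym2.mem_iff]
    rw [h, Finset.card_pair he.1]

lemma matNum_Gext {α ν : ℕ} (hν : 0 < ν) : matNum (Gext α ν) = ν := by
  classical
  set S := {n | ∃ m : Finset (Sym2 (Fin (2*ν+1) ⊕ Fin (α-1))),
      IsMatchingFinset (Gext α ν) m ∧ m.card = n} with hS
  let gen : Fin ν → Sym2 (Fin (2*ν+1) ⊕ Fin (α-1)) := fun k =>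
    s(Sum.inl ⟨2*k.val, by have := k.isLt; omega⟩, Sum.inl ⟨2*k.val+1, by have := k.isLt; omega⟩)
  have hgeninj : Function.Injective gen := by
    intro k j h
    simp only [gen, Sym2.eq_iff, Sum.inl.injEq, Fin.mk.injEq] at h
    exact Fin.ext (by omega)
  have hmem : ν ∈ S := by
    refine ⟨Finset.univ.image gen, ⟨?_, ?_⟩, ?_⟩
    · intro e he
      simp only [Finset.coe_image, Finset.coe_univ, Set.image_univ, Set.mem_range] at he
      obtain ⟨k, rfl⟩ := he
      rw [SimpleGraph.mem_edgeSet, gext_adj]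
      exact ⟨by simp [Fin.ext_iff], rfl, rfl⟩
    · intro e he f hf hne v hv
      obtain ⟨hve, hvf⟩ := hv
      simp only [Finset.mem_image, Finset.mem_univ, true_and] at he hf
      obtain ⟨k, rfl⟩ := he
      obtain ⟨j, rfl⟩ := hf
      have hkj : k.val ≠ j.val := fun h => hne (by rw [Fin.ext h])
      rw [Sym2.mem_iff] at hve hvf
      rcases hve with rfl | rfl <;> rcases hvf with h | h <;>
        · simp only [Sum.inl.injEq, Fin.mk.injEq] at h
          omega
    · rw [Finset.card_image_of_injective _ hgeninj, Finset.card_univ, Fintype.card_fin]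
  have hub : ∀ n ∈ S, n ≤ ν := by
    rintro n ⟨m, ⟨hsub, hdisj⟩, rfl⟩
    have hdisj2 : ∀ e ∈ m, ∀ f ∈ m, e ≠ f →
        Disjoint (Finset.univ.filter (fun v => v ∈ e))
          (Finset.univ.filter (fun v => v ∈ f)) := by
      intro e he f hf hne
      rw [Finset.disjoint_left]
      intro v hv1 hv2
      simp only [Finset.mem_filter] at hv1 hv2
      exact hdisj e he f hf hne v ⟨hv1.2, hv2.2⟩
    have hcard : (m.biUnion (fun e => Finset.univ.filter (fun v => v ∈ e))).card
        = 2 * m.card := by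
      rw [Finset.card_biUnion hdisj2]
      rw [Finset.sum_congr rfl (fun e he => gext_edge_card e (hsub he))]
      simp [mul_comm]
    have hsubL : m.biUnion (fun e => Finset.univ.filter (fun v => v ∈ e))
        ⊆ Finset.univ.filter (fun v => v.isLeft = true) := by
      intro v hv
      simp only [Finset.mem_biUnion, Finset.mem_filter, Finset.mem_univ, true_and] at hv ⊢
      obtain ⟨e, he, hve⟩ := hv
      exact gext_edge_left e (hsub he) v hve
    have hL : (Finset.univ.filter
        (fun v : Fin (2*ν+1) ⊕ Fin (α-1) => v.isLeft = true)).card = 2*ν+1 := by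
      have h : (Finset.univ.filter
          (fun v : Fin (2*ν+1) ⊕ Fin (α-1) => v.isLeft = true))
          = Finset.univ.image Sum.inl := by
        ext v
        cases v <;> simp
      rw [h, Finset.card_image_of_injective _ Sum.inl_injective, Finset.card_univ,
        Fintype.card_fin]
    have := Finset.card_le_card hsubL
    omega
  exact le_antisymm (csSup_le ⟨ν, hmem⟩ hub) (le_csSup ⟨ν, hub⟩ hmem)

lemma edgeCount_Gext_ge {α ν : ℕ} : (2*ν+1).choose 2 ≤ edgeCount (Gext α ν) := by
  classical
  have key : ∀ f : Sym2 (Fin (2*ν+1)), f ∈ (⊤ : SimpleGraph (Fin (2*ν+1))).edgeSet →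
      Sym2.map Sum.inl f ∈ (Gext α ν).edgeSet := by
    intro f
    induction f using Sym2.ind with
    | _ a b =>
      intro hf
      rw [SimpleGraph.mem_edgeSet, SimpleGraph.top_adj] at hf
      rw [Sym2.map_pair_eq, SimpleGraph.mem_edgeSet, gext_adj]
      exact ⟨by simp [hf], rfl, rfl⟩
  have hsub : (Sym2.map (Sum.inl : Fin (2*ν+1) → Fin (2*ν+1) ⊕ Fin (α-1))) ''
      (⊤ : SimpleGraph (Fin (2*ν+1))).edgeSet ⊆ (Gext α ν).edgeSet := by
    rintro e ⟨f, hf, rfl⟩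
    exact key f hf
  have htop : ((⊤ : SimpleGraph (Fin (2*ν+1))).edgeSet).ncard = (2*ν+1).choose 2 := by
    rw [Set.ncard_eq_toFinset_card']
    have := SimpleGraph.card_edgeFinset_top_eq_card_choose_two (V := Fin (2*ν+1))
    rw [Fintype.card_fin] at this
    convert this using 2
    ext e; simp
  calc (2*ν+1).choose 2
      = ((Sym2.map (Sum.inl : Fin (2*ν+1) → Fin (2*ν+1) ⊕ Fin (α-1))) ''
          (⊤ : SimpleGraph (Fin (2*ν+1))).edgeSet).ncard := by
        rw [Set.ncard_image_of_injective _ (Sym2.map.injective Sum.inl_injective), htop]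
    _ ≤ edgeCount (Gext α ν) := Set.ncard_le_ncard hsub (Set.toFinite _)

/-- If `α > 1` and `G` is edge-extremal for `(α, ν)`,
then `G` has at least `2ν + 2` vertices. -/
theorem extremal_card_ge (α ν : ℕ) (hα : 1 < α) (hν : 0 < ν)
    {V : Type*} [Fintype V] (G : SimpleGraph V)
    (hext : EdgeExtremal G α ν) :
    2 * ν + 2 ≤ Fintype.card V := by
  classical
  obtain ⟨hind, hmat, hmax⟩ := hext
  set S := {n | ∃ s : Finset V, (∀ x ∈ s, ∀ y ∈ s, ¬ G.Adj x y) ∧ s.card = n} with hSdef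
  have hSne : S.Nonempty := ⟨0, ∅, by simp⟩
  have hSbdd : BddAbove S := ⟨Fintype.card V, by
    rintro n ⟨s, _, rfl⟩; exact Finset.card_le_univ s⟩
  have hαmem : α ∈ S := by
    have := Nat.sSup_mem hSne hSbdd
    rwa [show sSup S = α from hind] at this
  obtain ⟨s, hsind, hscard⟩ := hαmem
  obtain ⟨u, hu, v, hv, huv⟩ := Finset.one_lt_card.1 (by omega : 1 < s.card)
  have hnadj : ¬ G.Adj u v := hsind u hu v hv
  have h1 : edgeCount (Gext α ν) ≤ edgeCount G :=
    hmax _ (Gext α ν) (indNum_Gext hα) (matNum_Gext hν)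
  have h2 : (2*ν+1).choose 2 ≤ edgeCount (Gext α ν) := edgeCount_Gext_ge
  have htop : ((⊤ : SimpleGraph V).edgeSet).ncard = (Fintype.card V).choose 2 := by
    rw [Set.ncard_eq_toFinset_card']
    have := SimpleGraph.card_edgeFinset_top_eq_card_choose_two (V := V)
    convert this using 2
    ext e; simp
  have h3 : edgeCount G ≤ (Fintype.card V).choose 2 - 1 := by
    have hsubset : G.edgeSet ⊆ (⊤ : SimpleGraph V).edgeSet \ {s(u,v)} := by
      intro e he
      refine ⟨SimpleGraph.edgeSet_mono le_top he, ?_⟩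
      simp only [Set.mem_singleton_iff]
      rintro rfl
      exact hnadj ((SimpleGraph.mem_edgeSet G).1 he)
    have hmemtop : s(u,v) ∈ (⊤ : SimpleGraph V).edgeSet := by
      rw [SimpleGraph.mem_edgeSet, SimpleGraph.top_adj]; exact huv
    calc edgeCount G ≤ ((⊤ : SimpleGraph V).edgeSet \ {s(u,v)}).ncard :=
          Set.ncard_le_ncard hsubset (Set.toFinite _)
      _ = ((⊤ : SimpleGraph V).edgeSet).ncard - 1 :=
          Set.ncard_diff_singleton_of_mem hmemtop
      _ = (Fintype.card V).choose 2 - 1 := by rw [htop]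
  have h5 : 3 ≤ (2*ν+1).choose 2 := by
    calc 3 = Nat.choose 3 2 := by decide
      _ ≤ (2*ν+1).choose 2 := Nat.choose_le_choose 2 (by omega)
  by_contra hcon
  push_neg at hcon
  have h6 : (Fintype.card V).choose 2 ≤ (2*ν+1).choose 2 :=
    Nat.choose_le_choose 2 (by omega)
  omega
end

section
/- Let α, ν be positive integers and let G be a finite simple graph with independence number α, matching number ν, and the maximum possible number of edges among all finite simple graphs with independence number α and matching number ν. If v is a vertex of G that is covered by every maximum matching of G (i.e., ν(G \ v) = ν(G) − 1), then v is adjacent to every other vertex of G. -/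
section AuxLemmas
open SimpleGraph
set_option linter.unusedSectionVars false

variable {V : Type*} [Fintype V] {W : Type*} [Fintype W]

lemma matSet_nonempty (G : SimpleGraph V) :
    {n | ∃ m : Finset (Sym2 V), IsMatchingFinset G m ∧ m.card = n}.Nonempty :=
  ⟨0, ∅, ⟨by simp, by simp⟩, rfl⟩

lemma matSet_bdd (G : SimpleGraph V) :
    BddAbove {n | ∃ m : Finset (Sym2 V), IsMatchingFinset G m ∧ m.card = n} := by
  classical
  exact ⟨Fintype.card (Sym2 V), by rintro x ⟨m, _, rfl⟩; exact Finset.card_le_univ m⟩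

lemma le_matNum (G : SimpleGraph V) {m : Finset (Sym2 V)} (hm : IsMatchingFinset G m) :
    m.card ≤ matNum G := le_csSup (matSet_bdd G) ⟨m, hm, rfl⟩

lemma matNum_le (G : SimpleGraph V) {n : ℕ}
    (h : ∀ m : Finset (Sym2 V), IsMatchingFinset G m → m.card ≤ n) : matNum G ≤ n := by
  apply csSup_le (matSet_nonempty G); rintro x ⟨m, hm, rfl⟩; exact h m hm

lemma indSet_nonempty (G : SimpleGraph V) :
    {n | ∃ s : Finset V, (∀ x ∈ s, ∀ y ∈ s, ¬ G.Adj x y) ∧ s.card = n}.Nonempty :=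
  ⟨0, ∅, ⟨by simp, by simp⟩⟩

lemma indSet_bdd (G : SimpleGraph V) :
    BddAbove {n | ∃ s : Finset V, (∀ x ∈ s, ∀ y ∈ s, ¬ G.Adj x y) ∧ s.card = n} :=
  ⟨Fintype.card V, by rintro x ⟨s, _, rfl⟩; exact Finset.card_le_univ s⟩

lemma le_indNum (G : SimpleGraph V) {s : Finset V} (hs : ∀ x ∈ s, ∀ y ∈ s, ¬ G.Adj x y) :
    s.card ≤ indNum G := le_csSup (indSet_bdd G) ⟨s, hs, rfl⟩

lemma indNum_le (G : SimpleGraph V) {n : ℕ}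
    (h : ∀ s : Finset V, (∀ x ∈ s, ∀ y ∈ s, ¬ G.Adj x y) → s.card ≤ n) : indNum G ≤ n := by
  apply csSup_le (indSet_nonempty G); rintro x ⟨s, hs, rfl⟩; exact h s hs

lemma exists_max_indSet (G : SimpleGraph V) :
    ∃ s : Finset V, (∀ x ∈ s, ∀ y ∈ s, ¬ G.Adj x y) ∧ s.card = indNum G :=
  Nat.sSup_mem (indSet_nonempty G) (indSet_bdd G)

lemma matNum_mono {G G' : SimpleGraph V} (h : G ≤ G') : matNum G ≤ matNum G' := by
  apply matNum_le; intro m hm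
  exact le_matNum _ ⟨fun e he => (edgeSet_subset_edgeSet.2 h) (hm.1 he), hm.2⟩

lemma indNum_anti {G G' : SimpleGraph V} (h : G ≤ G') : indNum G' ≤ indNum G := by
  apply indNum_le; intro s hs
  exact le_indNum _ (fun x hx y hy hxy => hs x hx y hy (h hxy))

/-- A matching of `G` avoiding `v` has size at most the matching number of `G \ v`. -/
lemma card_le_matNum_induce (G : SimpleGraph V) (v : V) {m : Finset (Sym2 V)}
    (hm : IsMatchingFinset G m) (hv : ∀ e ∈ m, v ∉ e) :
    m.card ≤ matNum (G.induce {u | u ≠ v}) := by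
  classical
  rcases m.eq_empty_or_nonempty with rfl | ⟨e0, he0⟩
  · simp
  · obtain ⟨a0, b0⟩ := e0
    have ha0 : a0 ≠ v := by
      intro h; exact hv _ he0 (h ▸ Sym2.mem_mk_left a0 b0)
    set S : Set V := {u | u ≠ v} with hS
    let w0 : S := ⟨a0, ha0⟩
    let g : V → S := fun x => if h : x ≠ v then ⟨x, h⟩ else w0
    have hg : ∀ x : V, x ≠ v → (g x : V) = x := by
      intro x hx; simp only [g, dif_pos hx]
    have key : ∀ e ∈ m, Sym2.map (fun (x : S) => (x : V)) (Sym2.map g e) = e := by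
      intro e he
      obtain ⟨a, b⟩ := e
      have ha : a ≠ v := fun h => hv _ he (h ▸ Sym2.mem_mk_left a b)
      have hb : b ≠ v := fun h => hv _ he (h ▸ Sym2.mem_mk_right a b)
      simp [Sym2.map_pair_eq, hg a ha, hg b hb]
    let m' : Finset (Sym2 S) := m.image (Sym2.map g)
    have hcard : m'.card = m.card := by
      apply Finset.card_image_of_injOn
      intro e1 h1 e2 h2 heq
      have := congrArg (Sym2.map (fun (x : S) => (x : V))) heq
      rwa [key e1 h1, key e2 h2] at this
    have hmatch : IsMatchingFinset (G.induce S) m' := by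
      constructor
      · intro e he
        simp only [m', Finset.coe_image, Set.mem_image, Finset.mem_coe] at he
        obtain ⟨e', he', rfl⟩ := he
        obtain ⟨a, b⟩ := e'
        have ha : a ≠ v := fun h => hv _ he' (h ▸ Sym2.mem_mk_left a b)
        have hb : b ≠ v := fun h => hv _ he' (h ▸ Sym2.mem_mk_right a b)
        have hadj : G.Adj a b := hm.1 he'
        rw [Sym2.map_pair_eq, mem_edgeSet]
        show G.Adj (g a : V) (g b : V)
        rwa [hg a ha, hg b hb]
      · intro e1 h1 e2 h2 hne w hw
        simp only [m', Finset.mem_image] at h1 h2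
        obtain ⟨f1, hf1, rfl⟩ := h1
        obtain ⟨f2, hf2, rfl⟩ := h2
        have hne' : f1 ≠ f2 := by rintro rfl; exact hne rfl
        apply hm.2 f1 hf1 f2 hf2 hne' (w : V)
        constructor
        · have : (w : V) ∈ Sym2.map (fun (x : S) => (x : V)) (Sym2.map g f1) :=
            Sym2.mem_map.mpr ⟨w, hw.1, rfl⟩
          rwa [key f1 hf1] at this
        · have : (w : V) ∈ Sym2.map (fun (x : S) => (x : V)) (Sym2.map g f2) :=
            Sym2.mem_map.mpr ⟨w, hw.2, rfl⟩
          rwa [key f2 hf2] at this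
    calc m.card = m'.card := hcard.symm
    _ ≤ matNum (G.induce S) := le_matNum _ hmatch

lemma edgeSet_map' (f : V ↪ W) (G : SimpleGraph V) :
    (G.map f).edgeSet = Sym2.map f '' G.edgeSet := by
  ext e
  obtain ⟨a, b⟩ := e
  simp only [mem_edgeSet, map_adj, Set.mem_image]
  constructor
  · rintro ⟨x, y, hxy, rfl, rfl⟩
    exact ⟨s(x, y), by simpa using hxy, by simp [Sym2.map_pair_eq]⟩
  · rintro ⟨e', he', heq⟩
    obtain ⟨x, y⟩ := e'
    rw [Sym2.map_pair_eq, Sym2.eq_iff] at heq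
    rcases heq with ⟨rfl, rfl⟩ | ⟨rfl, rfl⟩
    · exact ⟨x, y, he', rfl, rfl⟩
    · exact ⟨y, x, (mem_edgeSet _).1 ((Sym2.eq_swap ▸ he') : _), rfl, rfl⟩

lemma edgeCount_map (f : V ↪ W) (G : SimpleGraph V) :
    edgeCount (G.map f) = edgeCount G := by
  rw [edgeCount, edgeCount, edgeSet_map',
    Set.ncard_image_of_injective _ (Sym2.map.injective f.injective)]

lemma matNum_map (f : V ↪ W) (G : SimpleGraph V) :
    matNum (G.map f) = matNum G := by
  classical
  apply le_antisymm
  · apply matNum_le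
    intro m hm
    rcases m.eq_empty_or_nonempty with rfl | ⟨e0, he0⟩
    · simp [matNum]
    · have he0' := hm.1 he0
      rw [edgeSet_map'] at he0'
      obtain ⟨f0, hf0, -⟩ := he0'
      obtain ⟨a0, b0⟩ := f0
      let g : W → V := fun w => if h : ∃ x, f x = w then h.choose else a0
      have hgf : ∀ x : V, g (f x) = x := by
        intro x
        have h : ∃ y, f y = f x := ⟨x, rfl⟩
        simp only [g, dif_pos h]
        exact f.injective h.choose_spec
      have hgf2 : ∀ e : Sym2 V, Sym2.map g (Sym2.map f e) = e := by
        intro e; obtain ⟨a, b⟩ := e; simp [Sym2.map_pair_eq, hgf]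
      have hrep : ∀ e ∈ m, Sym2.map f (Sym2.map g e) = e ∧ Sym2.map g e ∈ G.edgeSet := by
        intro e he
        have := hm.1 he
        rw [edgeSet_map'] at this
        obtain ⟨e', he', rfl⟩ := this
        rw [hgf2]
        exact ⟨rfl, he'⟩
      let m' : Finset (Sym2 V) := m.image (Sym2.map g)
      have hcard : m'.card = m.card := by
        apply Finset.card_image_of_injOn
        intro e1 h1 e2 h2 heq
        have := congrArg (Sym2.map f) heq
        rwa [(hrep e1 h1).1, (hrep e2 h2).1] at this
      have hmatch : IsMatchingFinset G m' := by
        constructor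
        · intro e he
          simp only [m', Finset.coe_image, Set.mem_image, Finset.mem_coe] at he
          obtain ⟨e', he', rfl⟩ := he
          exact (hrep e' he').2
        · intro e1 h1 e2 h2 hne x hx
          simp only [m', Finset.mem_image] at h1 h2
          obtain ⟨f1, hf1, rfl⟩ := h1
          obtain ⟨f2, hf2, rfl⟩ := h2
          have hne' : f1 ≠ f2 := by rintro rfl; exact hne rfl
          apply hm.2 f1 hf1 f2 hf2 hne' (f x)
          constructor
          · have : f x ∈ Sym2.map f (Sym2.map g f1) := Sym2.mem_map.mpr ⟨x, hx.1, rfl⟩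
            rwa [(hrep f1 hf1).1] at this
          · have : f x ∈ Sym2.map f (Sym2.map g f2) := Sym2.mem_map.mpr ⟨x, hx.2, rfl⟩
            rwa [(hrep f2 hf2).1] at this
      calc m.card = m'.card := hcard.symm
      _ ≤ matNum G := le_matNum _ hmatch
  · apply matNum_le
    intro m hm
    let m' : Finset (Sym2 W) := m.image (Sym2.map f)
    have hcard : m'.card = m.card :=
      Finset.card_image_of_injective _ (Sym2.map.injective f.injective)
    have hmatch : IsMatchingFinset (G.map f) m' := by
      constructor
      · intro e he
        simp only [m', Finset.coe_image, Set.mem_image, Finset.mem_coe] at he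
        obtain ⟨e', he', rfl⟩ := he
        rw [edgeSet_map']
        exact ⟨e', hm.1 he', rfl⟩
      · intro e1 h1 e2 h2 hne w hw
        simp only [m', Finset.mem_image] at h1 h2
        obtain ⟨f1, hf1, rfl⟩ := h1
        obtain ⟨f2, hf2, rfl⟩ := h2
        have hne' : f1 ≠ f2 := by rintro rfl; exact hne rfl
        obtain ⟨x1, hx1, hfx1⟩ := Sym2.mem_map.mp hw.1
        obtain ⟨x2, hx2, hfx2⟩ := Sym2.mem_map.mp hw.2
        have : x1 = x2 := f.injective (hfx1.trans hfx2.symm)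
        exact hm.2 f1 hf1 f2 hf2 hne' x1 ⟨hx1, this ▸ hx2⟩
    calc m.card = m'.card := hcard.symm
    _ ≤ matNum (G.map f) := le_matNum _ hmatch

lemma indNum_map (f : V ↪ W) (G : SimpleGraph V) :
    indNum (G.map f) = indNum G + (Fintype.card W - Fintype.card V) := by
  classical
  have hcardle : Fintype.card V ≤ Fintype.card W := Fintype.card_le_of_embedding f
  have himg : (Finset.univ.image f).card = Fintype.card V := by
    rw [Finset.card_image_of_injective _ f.injective, Finset.card_univ]
  apply le_antisymm
  · apply indNum_le
    intro t ht
    let s : Finset V := Finset.univ.filter (fun x => f x ∈ t)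
    have hs : ∀ x ∈ s, ∀ y ∈ s, ¬ G.Adj x y := by
      intro x hx y hy hxy
      simp only [s, Finset.mem_filter] at hx hy
      exact ht _ hx.2 _ hy.2 ⟨f.injective.ne (G.ne_of_adj hxy), x, y, hxy, rfl, rfl⟩
    have himgs : s.image f = t ∩ Finset.univ.image f := by
      ext w
      simp only [s, Finset.mem_image, Finset.mem_inter, Finset.mem_filter, Finset.mem_univ,
        true_and]
      constructor
      · rintro ⟨x, hx, rfl⟩; exact ⟨hx, x, rfl⟩
      · rintro ⟨hw, x, rfl⟩; exact ⟨x, hw, rfl⟩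
    have hsplit : t.card = (t ∩ Finset.univ.image f).card + (t \ Finset.univ.image f).card := by
      rw [Finset.card_inter_add_card_sdiff]
    have h1 : (t ∩ Finset.univ.image f).card ≤ indNum G := by
      rw [← himgs, Finset.card_image_of_injective _ f.injective]
      exact le_indNum G hs
    have h2 : (t \ Finset.univ.image f).card ≤ Fintype.card W - Fintype.card V := by
      have : (t \ Finset.univ.image f).card ≤ (Finset.univ \ Finset.univ.image f).card :=
        Finset.card_le_card (Finset.sdiff_subset_sdiff (Finset.subset_univ t) le_rfl)
      rwa [Finset.card_sdiff_of_subset (Finset.subset_univ _), Finset.card_univ, himg] at this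
    omega
  · obtain ⟨s, hs, hscard⟩ := exists_max_indSet G
    let t : Finset W := s.image f ∪ (Finset.univ \ Finset.univ.image f)
    have ht : ∀ x ∈ t, ∀ y ∈ t, ¬ (G.map f).Adj x y := by
      intro x hx y hy hxy
      obtain ⟨-, a, b, hab, rfl, rfl⟩ := hxy
      simp only [t, Finset.mem_union, Finset.mem_sdiff, Finset.mem_univ, true_and,
        Finset.mem_image] at hx hy
      have hxa : a ∈ s := by
        rcases hx with ⟨a', ha', heq⟩ | hno
        · rwa [← f.injective heq]
        · exact absurd ⟨a, rfl⟩ hno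
      have hyb : b ∈ s := by
        rcases hy with ⟨b', hb', heq⟩ | hno
        · rwa [← f.injective heq]
        · exact absurd ⟨b, rfl⟩ hno
      exact hs a hxa b hyb hab
    have hcard : t.card = s.card + (Fintype.card W - Fintype.card V) := by
      rw [Finset.card_union_of_disjoint, Finset.card_image_of_injective _ f.injective,
        Finset.card_sdiff_of_subset (Finset.subset_univ _), Finset.card_univ, himg]
      · simp only [Finset.disjoint_left, Finset.mem_image, Finset.mem_sdiff, Finset.mem_univ,
          true_and]
        rintro w ⟨x, hx, rfl⟩ hno
        exact hno ⟨x, rfl⟩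
    have := le_indNum (G.map f) ht
    omega

end AuxLemmas

/-- If `G` is edge-extremal for `(α, ν)` and `v` is covered by every maximum
matching (i.e. `ν(G \ v) = ν(G) - 1`), then `v` is adjacent to every other vertex. -/
theorem extremal_essential_vertex_adj_all (α ν : ℕ) (hα : 0 < α) (hν : 0 < ν)
    {V : Type*} [Fintype V] (G : SimpleGraph V)
    (hext : EdgeExtremal G α ν) (v : V)
    (hv : matNum (G.induce {u | u ≠ v}) = matNum G - 1) :
    ∀ u : V, u ≠ v → G.Adj v u := by
  classical
  open SimpleGraph in
  obtain ⟨hGα, hGν, hmax⟩ := hext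
  intro u hu
  by_contra hadj
  have hadj' : ¬ G.Adj u v := fun h => hadj h.symm
  -- the graph with edge uv added
  set G' : SimpleGraph V := G ⊔ SimpleGraph.fromEdgeSet {s(u, v)} with hG'def
  have hle : G ≤ G' := le_sup_left
  have hnotmem : s(u, v) ∉ G.edgeSet := fun h => hadj' ((SimpleGraph.mem_edgeSet G).1 h)
  have hE' : G'.edgeSet = insert s(u, v) G.edgeSet := by
    rw [hG'def, SimpleGraph.edgeSet_sup, SimpleGraph.edgeSet_fromEdgeSet]
    have hdiag : ({s(u, v)} : Set (Sym2 V)) \ {e | e.IsDiag} = {s(u, v)} := by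
      ext e
      simp only [Set.mem_diff, Set.mem_singleton_iff, Set.mem_setOf_eq, and_iff_left_iff_imp]
      rintro rfl
      simp [hu]
    rw [Sym2.diagSet_eq_setOfPred_isDiag, hdiag, Set.union_singleton]
  have hEcount : edgeCount G' = edgeCount G + 1 := by
    rw [edgeCount, edgeCount, hE', Set.ncard_insert_of_notMem hnotmem (Set.toFinite _)]
  -- matching number of G' is still ν
  have hν' : matNum G' = ν := by
    apply le_antisymm
    · apply matNum_le
      intro m hm
      have hmsub : ↑m ⊆ insert s(u, v) G.edgeSet := hE' ▸ hm.1
      by_cases he : s(u, v) ∈ m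
      · set m2 := m.erase s(u, v) with hm2def
        have hm2sub : ↑m2 ⊆ G.edgeSet := by
          intro e he2
          simp only [hm2def, Finset.coe_erase, Set.mem_diff, Finset.mem_coe,
            Set.mem_singleton_iff] at he2
          rcases hmsub he2.1 with h | h
          · exact absurd h he2.2
          · exact h
        have hm2 : IsMatchingFinset G m2 := by
          refine ⟨hm2sub, fun e he1 f hf1 hne w hw => ?_⟩
          exact hm.2 e (Finset.mem_of_mem_erase he1) f (Finset.mem_of_mem_erase hf1) hne w hw
        have havoid : ∀ e ∈ m2, v ∉ e := by
          intro e he2 hve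
          exact hm.2 e (Finset.mem_of_mem_erase he2) s(u, v) he (Finset.ne_of_mem_erase he2) v
            ⟨hve, Sym2.mem_mk_right u v⟩
        have h1 := card_le_matNum_induce G v hm2 havoid
        rw [hv, hGν] at h1
        have h2 : m2.card + 1 = m.card := Finset.card_erase_add_one he
        omega
      · have hsub : ↑m ⊆ G.edgeSet := by
          intro e hme
          rcases hmsub hme with h | h
          · exact absurd (h ▸ hme) he
          · exact h
        have := le_matNum G ⟨hsub, hm.2⟩
        omega
    · calc ν = matNum G := hGν.symm
      _ ≤ matNum G' := matNum_mono hle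
  -- independence number of G' is α or α - 1
  have hα'le : indNum G' ≤ α := hGα ▸ indNum_anti hle
  have hα'ge : α ≤ indNum G' + 1 := by
    obtain ⟨s, hs, hscard⟩ := exists_max_indSet G
    set s2 := s.erase u with hs2def
    have hs2 : ∀ x ∈ s2, ∀ y ∈ s2, ¬ G'.Adj x y := by
      intro x hx y hy hxy
      rcases hxy with h | h
      · exact hs x (Finset.mem_of_mem_erase hx) y (Finset.mem_of_mem_erase hy) h
      · rw [SimpleGraph.fromEdgeSet_adj] at h
        have := h.1
        rw [Set.mem_singleton_iff, Sym2.eq_iff] at this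
        rcases this with ⟨rfl, rfl⟩ | ⟨rfl, rfl⟩
        · exact (Finset.ne_of_mem_erase hx) rfl
        · exact (Finset.ne_of_mem_erase hy) rfl
    have h1 : s2.card ≤ indNum G' := le_indNum G' hs2
    have h2 : s.card - 1 ≤ s2.card := by
      rw [hs2def]; exact Finset.pred_card_le_card_erase
    rw [hGα] at hscard
    omega
  -- transport to a Type-0 graph with extra isolated vertices
  set n := Fintype.card V with hndef
  set k := α - indNum G' with hkdef
  let f : V ↪ Fin (n + k) :=
    (Fintype.equivFin V).toEmbedding.trans (Fin.castLEEmb (Nat.le_add_right n k))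
  have hind : indNum (G'.map f) = α := by
    rw [indNum_map f G', Fintype.card_fin, ← hndef]
    omega
  have hmat : matNum (G'.map f) = ν := by rw [matNum_map f G', hν']
  have hcnt : edgeCount (G'.map f) = edgeCount G + 1 := by
    rw [edgeCount_map f G', hEcount]
  have := hmax (Fin (n + k)) (G'.map f) hind hmat
  omega
end

section
/- Let α, ν be positive integers and let G be a finite simple graph with independence number α, matching number ν, and the maximum possible number of edges among all finite simple graphs with independence number α and matching number ν. Let S_G be the set of vertices v of G with ν(G \ v) = ν(G) − 1. Then the matching number of the induced subgraph on the complement of S_G equals ν − |S_G|. -/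
namespace Aux
variable {V : Type*} {W : Type*}

lemma isMatchingFinset_empty (G : SimpleGraph V) : IsMatchingFinset G ∅ := by
  constructor
  · simp
  · intro e he; simp at he

lemma _root_.IsMatchingFinset.subset {G : SimpleGraph V} {m m' : Finset (Sym2 V)}
    (h : IsMatchingFinset G m) (hsub : m' ⊆ m) : IsMatchingFinset G m' :=
  ⟨fun e he => h.1 (hsub he), fun e he f hf => h.2 e (hsub he) f (hsub hf)⟩

lemma matNum_bddAbove [Fintype V] (G : SimpleGraph V) :
    BddAbove {n | ∃ m : Finset (Sym2 V), IsMatchingFinset G m ∧ m.card = n} := by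
  classical
  exact ⟨Fintype.card (Sym2 V), by rintro n ⟨m, _, rfl⟩; exact Finset.card_le_univ m⟩

lemma matNum_set_nonempty (G : SimpleGraph V) :
    Set.Nonempty {n | ∃ m : Finset (Sym2 V), IsMatchingFinset G m ∧ m.card = n} :=
  ⟨0, ∅, isMatchingFinset_empty G, rfl⟩

lemma exists_max_matching [Fintype V] (G : SimpleGraph V) :
    ∃ m : Finset (Sym2 V), IsMatchingFinset G m ∧ m.card = matNum G :=
  Nat.sSup_mem (matNum_set_nonempty G) (matNum_bddAbove G)

lemma card_le_matNum [Fintype V] {G : SimpleGraph V} {m : Finset (Sym2 V)}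
    (h : IsMatchingFinset G m) : m.card ≤ matNum G :=
  le_csSup (matNum_bddAbove G) ⟨m, h, rfl⟩

lemma indNum_bddAbove [Fintype V] (G : SimpleGraph V) :
    BddAbove {n | ∃ s : Finset V, (∀ x ∈ s, ∀ y ∈ s, ¬ G.Adj x y) ∧ s.card = n} :=
  ⟨Fintype.card V, by rintro n ⟨s, _, rfl⟩; exact Finset.card_le_univ s⟩

lemma indNum_set_nonempty (G : SimpleGraph V) :
    Set.Nonempty {n | ∃ s : Finset V, (∀ x ∈ s, ∀ y ∈ s, ¬ G.Adj x y) ∧ s.card = n} :=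
  ⟨0, ∅, by simp, rfl⟩

lemma exists_max_indep [Fintype V] (G : SimpleGraph V) :
    ∃ s : Finset V, (∀ x ∈ s, ∀ y ∈ s, ¬ G.Adj x y) ∧ s.card = indNum G :=
  Nat.sSup_mem (indNum_set_nonempty G) (indNum_bddAbove G)

lemma card_le_indNum [Fintype V] {G : SimpleGraph V} {s : Finset V}
    (h : ∀ x ∈ s, ∀ y ∈ s, ¬ G.Adj x y) : s.card ≤ indNum G :=
  le_csSup (indNum_bddAbove G) ⟨s, h, rfl⟩


lemma sym2_eq (e : Sym2 V) : ∃ a b, e = s(a, b) := by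
  induction e using Sym2.ind with | _ a b => exact ⟨a, b, rfl⟩

lemma sym2_exists_mem (e : Sym2 V) : ∃ v, v ∈ e := by
  obtain ⟨a, b, rfl⟩ := sym2_eq e
  exact ⟨a, Sym2.mem_mk_left a b⟩

lemma sym2_map_inj {ψ : V → W} : ∀ e₁ e₂ : Sym2 V,
    (∀ v₁ ∈ e₁, ∀ v₂ ∈ e₂, ψ v₁ = ψ v₂ → v₁ = v₂) →
    Sym2.map ψ e₁ = Sym2.map ψ e₂ → e₁ = e₂ := by
  intro e₁ e₂
  induction e₁ using Sym2.ind with | _ a b =>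
  induction e₂ using Sym2.ind with | _ c d =>
  intro h heq
  rw [Sym2.map_pair_eq, Sym2.map_pair_eq, Sym2.eq_iff] at heq
  have ha : a ∈ s(a, b) := Sym2.mem_mk_left a b
  have hb : b ∈ s(a, b) := Sym2.mem_mk_right a b
  have hc : c ∈ s(c, d) := Sym2.mem_mk_left c d
  have hd : d ∈ s(c, d) := Sym2.mem_mk_right c d
  rw [Sym2.eq_iff]
  rcases heq with ⟨h1, h2⟩ | ⟨h1, h2⟩
  · exact Or.inl ⟨h a ha c hc h1, h b hb d hd h2⟩
  · exact Or.inr ⟨h a ha d hd h1, h b hb c hc h2⟩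

lemma matching_image {G : SimpleGraph V} {H : SimpleGraph W} {m : Finset (Sym2 V)}
    [DecidableEq (Sym2 W)]
    (hm : IsMatchingFinset G m) (φ : Sym2 V → Sym2 W)
    (h1 : ∀ e ∈ m, φ e ∈ H.edgeSet)
    (h2 : ∀ e₁ ∈ m, ∀ e₂ ∈ m, e₁ ≠ e₂ → ∀ w : W, ¬(w ∈ φ e₁ ∧ w ∈ φ e₂))
    (h3 : Set.InjOn φ ↑m) :
    IsMatchingFinset H (m.image φ) ∧ (m.image φ).card = m.card := by
  refine ⟨⟨?_, ?_⟩, Finset.card_image_of_injOn h3⟩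
  · intro e he
    simp only [Finset.coe_image, Set.mem_image, Finset.mem_coe] at he
    obtain ⟨e₀, he₀, rfl⟩ := he
    exact h1 e₀ he₀
  · intro e he f hf hne w hw
    simp only [Finset.mem_image] at he hf
    obtain ⟨e₀, he₀, rfl⟩ := he
    obtain ⟨f₀, hf₀, rfl⟩ := hf
    exact h2 e₀ he₀ f₀ hf₀ (fun h => hne (by rw [h])) w hw

lemma matching_map {G : SimpleGraph V} {H : SimpleGraph W} {m : Finset (Sym2 V)}
    [DecidableEq (Sym2 W)]
    (hm : IsMatchingFinset G m) (ψ : V → W)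
    (hadj : ∀ e ∈ m, (Sym2.map ψ e) ∈ H.edgeSet)
    (hinj : ∀ e₁ ∈ m, ∀ e₂ ∈ m, ∀ v₁ ∈ e₁, ∀ v₂ ∈ e₂, ψ v₁ = ψ v₂ → v₁ = v₂) :
    IsMatchingFinset H (m.image (Sym2.map ψ)) ∧ (m.image (Sym2.map ψ)).card = m.card := by
  have hinjOn : Set.InjOn (Sym2.map ψ) ↑m := by
    intro e₁ h₁ e₂ h₂ heq
    exact sym2_map_inj e₁ e₂ (fun v₁ hv₁ v₂ hv₂ => hinj e₁ h₁ e₂ h₂ v₁ hv₁ v₂ hv₂) heq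
  refine ⟨⟨?_, ?_⟩, Finset.card_image_of_injOn hinjOn⟩
  · intro e he
    simp only [Finset.coe_image, Set.mem_image, Finset.mem_coe] at he
    obtain ⟨e₀, he₀, rfl⟩ := he
    exact hadj e₀ he₀
  · intro e he f hf hne w hw
    simp only [Finset.mem_image] at he hf
    obtain ⟨e₀, he₀, rfl⟩ := he
    obtain ⟨f₀, hf₀, rfl⟩ := hf
    obtain ⟨hw1, hw2⟩ := hw
    rw [Sym2.mem_map] at hw1 hw2
    obtain ⟨v₁, hv₁, hv₁'⟩ := hw1
    obtain ⟨v₂, hv₂, hv₂'⟩ := hw2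
    have hv : v₁ = v₂ := hinj e₀ he₀ f₀ hf₀ v₁ hv₁ v₂ hv₂ (hv₁'.trans hv₂'.symm)
    have he0f0 : e₀ ≠ f₀ := fun h => hne (by rw [h])
    exact hm.2 e₀ he₀ f₀ hf₀ he0f0 v₁ ⟨hv₁, hv ▸ hv₂⟩

lemma matchingOn_le [Fintype V] {G : SimpleGraph V} {A : Set V} {m : Finset (Sym2 V)}
    (hm : IsMatchingFinset G m) (hsupp : ∀ e ∈ m, ∀ v ∈ e, v ∈ A) :
    m.card ≤ matNum (G.induce A) := by
  classical
  letI : Fintype ↥A := (Set.toFinite A).fintype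
  rcases Finset.eq_empty_or_nonempty m with rfl | ⟨e₀, he₀⟩
  · simp
  obtain ⟨a₀, ha₀e⟩ := sym2_exists_mem e₀
  have ha₀ : a₀ ∈ A := hsupp e₀ he₀ a₀ ha₀e
  set ψ : V → ↥A := fun v => if h : v ∈ A then (⟨v, h⟩ : ↥A) else ⟨a₀, ha₀⟩ with hψ
  have hψval : ∀ v ∈ A, (ψ v : V) = v := by
    intro v hv; simp [hψ, hv]
  have key := matching_map (H := G.induce A) hm ψ ?_ ?_
  · rw [← key.2]
    exact card_le_matNum key.1
  · intro e he
    obtain ⟨a, b, rfl⟩ := sym2_eq e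
    have ha : a ∈ A := hsupp _ he a (Sym2.mem_mk_left a b)
    have hb : b ∈ A := hsupp _ he b (Sym2.mem_mk_right a b)
    have hadj : G.Adj a b := hm.1 he
    rw [Sym2.map_pair_eq, SimpleGraph.mem_edgeSet]
    show G.Adj ↑(ψ a) ↑(ψ b)
    rwa [hψval a ha, hψval b hb]
  · intro e₁ h₁ e₂ h₂ v₁ hv₁ v₂ hv₂ heq
    have h1 : (ψ v₁ : V) = v₁ := hψval v₁ (hsupp e₁ h₁ v₁ hv₁)
    have h2 : (ψ v₂ : V) = v₂ := hψval v₂ (hsupp e₂ h₂ v₂ hv₂)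
    rw [← h1, ← h2, heq]

lemma exists_matchingOn [Fintype V] (G : SimpleGraph V) (A : Set V) :
    ∃ m : Finset (Sym2 V), IsMatchingFinset G m ∧ (∀ e ∈ m, ∀ v ∈ e, v ∈ A) ∧
      m.card = matNum (G.induce A) := by
  classical
  letI : Fintype ↥A := (Set.toFinite A).fintype
  obtain ⟨m', hm', hcard⟩ := exists_max_matching (G.induce A)
  have key := matching_map (H := G) hm' (Subtype.val) ?_ ?_
  · refine ⟨m'.image (Sym2.map Subtype.val), key.1, ?_, key.2.trans hcard⟩
    intro e he v hv
    simp only [Finset.mem_image] at he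
    obtain ⟨e₀, _, rfl⟩ := he
    rw [Sym2.mem_map] at hv
    obtain ⟨v₀, _, rfl⟩ := hv
    exact v₀.2
  · intro e he
    obtain ⟨a, b, rfl⟩ := sym2_eq e
    have hadj : (G.induce A).Adj a b := hm'.1 he
    rw [Sym2.map_pair_eq, SimpleGraph.mem_edgeSet]
    exact hadj
  · intro e₁ _ e₂ _ v₁ _ v₂ _ heq
    exact Subtype.val_injective heq

lemma matNum_induce_le [Fintype V] (G : SimpleGraph V) (A : Set V) :
    matNum (G.induce A) ≤ matNum G := by
  obtain ⟨m, hm, _, hcard⟩ := exists_matchingOn G A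
  rw [← hcard]
  exact card_le_matNum hm

lemma matNum_induce_mono [Fintype V] (G : SimpleGraph V) {A B : Set V} (hAB : A ⊆ B) :
    matNum (G.induce A) ≤ matNum (G.induce B) := by
  obtain ⟨m, hm, hsupp, hcard⟩ := exists_matchingOn G A
  rw [← hcard]
  exact matchingOn_le hm (fun e he v hv => hAB (hsupp e he v hv))


open Classical in
/-- The set of vertices covered by a finite set of edges. -/
noncomputable def suppFin {V : Type*} [Fintype V] (m : Finset (Sym2 V)) : Finset V :=
  Finset.univ.filter (fun v => ∃ e ∈ m, v ∈ e)

lemma mem_suppFin [Fintype V] {m : Finset (Sym2 V)} {v : V} :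
    v ∈ suppFin m ↔ ∃ e ∈ m, v ∈ e := by
  simp [suppFin]

lemma card_suppFin [Fintype V] {G : SimpleGraph V} :
    ∀ m : Finset (Sym2 V), IsMatchingFinset G m → (suppFin m).card = 2 * m.card := by
  classical
  intro m
  induction m using Finset.induction_on with
  | empty =>
    intro _
    have : suppFin (∅ : Finset (Sym2 V)) = ∅ := by
      ext v; simp [mem_suppFin]
    simp [this]
  | @insert e m he ih =>
    intro hm
    have hm' : IsMatchingFinset G m := hm.subset (Finset.subset_insert e m)
    obtain ⟨a, b, rfl⟩ := sym2_eq e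
    have hadj : G.Adj a b := hm.1 (Finset.mem_insert_self _ _)
    have hab : a ≠ b := hadj.ne
    have hsplit : suppFin (insert s(a, b) m) = {a, b} ∪ suppFin m := by
      ext v
      rw [Finset.mem_union, mem_suppFin, mem_suppFin]
      constructor
      · rintro ⟨f, hf, hvf⟩
        rcases Finset.mem_insert.1 hf with rfl | hf
        · left
          rcases Sym2.mem_iff.1 hvf with rfl | rfl
          · exact Finset.mem_insert_self _ _
          · exact Finset.mem_insert_of_mem (Finset.mem_singleton_self _)
        · exact Or.inr ⟨f, hf, hvf⟩
      · rintro (h | ⟨f, hf, hvf⟩)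
        · refine ⟨s(a, b), Finset.mem_insert_self _ _, Sym2.mem_iff.2 ?_⟩
          rcases Finset.mem_insert.1 h with rfl | h
          · exact Or.inl rfl
          · exact Or.inr (Finset.mem_singleton.1 h)
        · exact ⟨f, Finset.mem_insert_of_mem hf, hvf⟩
    have hdisj : Disjoint ({a, b} : Finset V) (suppFin m) := by
      rw [Finset.disjoint_left]
      intro v hv hv'
      obtain ⟨f, hf, hvf⟩ := mem_suppFin.1 hv'
      have hne : s(a, b) ≠ f := by rintro rfl; exact he hf
      have hvab : v ∈ s(a, b) := Sym2.mem_iff.2 (by simpa using hv)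
      exact hm.2 _ (Finset.mem_insert_self _ _) f (Finset.mem_insert_of_mem hf) hne v ⟨hvab, hvf⟩
    rw [hsplit, Finset.card_union_of_disjoint hdisj, ih hm',
      Finset.card_insert_of_notMem he,
      Finset.card_insert_of_notMem (by simpa using hab), Finset.card_singleton]
    ring

lemma two_mul_matNum_le [Fintype V] (G : SimpleGraph V) :
    2 * matNum G ≤ Fintype.card V := by
  obtain ⟨m, hm, hcard⟩ := exists_max_matching G
  rw [← hcard, ← card_suppFin m hm]
  exact Finset.card_le_univ _

lemma matching_union [Fintype V] [DecidableEq (Sym2 V)] {G : SimpleGraph V} {m₁ m₂ : Finset (Sym2 V)}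
    (h₁ : IsMatchingFinset G m₁) (h₂ : IsMatchingFinset G m₂)
    (hdisj : ∀ e₁ ∈ m₁, ∀ e₂ ∈ m₂, ∀ v : V, ¬(v ∈ e₁ ∧ v ∈ e₂)) :
    IsMatchingFinset G (m₁ ∪ m₂) ∧ (m₁ ∪ m₂).card = m₁.card + m₂.card := by
  classical
  have hd : Disjoint m₁ m₂ := by
    rw [Finset.disjoint_left]
    intro e he₁ he₂
    obtain ⟨v, hv⟩ := sym2_exists_mem e
    exact hdisj e he₁ e he₂ v ⟨hv, hv⟩
  constructor
  · constructor
    · intro e he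
      rcases Finset.mem_union.1 he with h | h
      · exact h₁.1 h
      · exact h₂.1 h
    · intro e he f hf hne v hv
      rcases Finset.mem_union.1 he with he' | he' <;> rcases Finset.mem_union.1 hf with hf' | hf'
      · exact h₁.2 e he' f hf' hne v hv
      · exact hdisj e he' f hf' v hv
      · exact hdisj f hf' e he' v ⟨hv.2, hv.1⟩
      · exact h₂.2 e he' f hf' hne v hv
  · exact Finset.card_union_of_disjoint hd

lemma matNum_le_del_add_one [Fintype V] (G : SimpleGraph V) (v : V) :
    matNum G ≤ matNum (G.induce {u | u ≠ v}) + 1 := by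
  classical
  obtain ⟨m, hm, hcard⟩ := exists_max_matching G
  set m' := m.filter (fun e => ¬ v ∈ e) with hm'def
  have hm' : IsMatchingFinset G m' := hm.subset (Finset.filter_subset _ _)
  have hsupp : ∀ e ∈ m', ∀ w ∈ e, w ∈ {u | u ≠ v} := by
    intro e he w hw
    have := (Finset.mem_filter.1 he).2
    intro hwv
    exact this (hwv ▸ hw)
  have hone : (m.filter (fun e => v ∈ e)).card ≤ 1 := by
    apply Finset.card_le_one.2
    intro e he f hf
    have he' := Finset.mem_filter.1 he
    have hf' := Finset.mem_filter.1 hf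
    by_contra hne
    exact hm.2 e he'.1 f hf'.1 hne v ⟨he'.2, hf'.2⟩
  have hsum : (m.filter (fun e => v ∈ e)).card + m'.card = m.card :=
    Finset.card_filter_add_card_filter_not _
  have := matchingOn_le hm' hsupp
  omega

lemma clique_matching [Fintype V] {G : SimpleGraph V} :
    ∀ T : Finset V, (∀ x ∈ T, ∀ y ∈ T, x ≠ y → G.Adj x y) →
    ∃ m : Finset (Sym2 V), IsMatchingFinset G m ∧ (∀ e ∈ m, ∀ v ∈ e, v ∈ T) ∧
      T.card ≤ 2 * m.card + 1 := by
  classical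
  intro T
  induction T using Finset.strongInductionOn with
  | _ T ih =>
    intro hclique
    rcases le_or_gt T.card 1 with h1 | h1
    · exact ⟨∅, isMatchingFinset_empty G, by simp, by simpa using h1⟩
    · obtain ⟨a, ha, b, hb, hab⟩ := Finset.one_lt_card.1 h1
      set T' := T \ {a, b} with hT'def
      have hssub : T' ⊂ T := by
        apply Finset.sdiff_ssubset
        · intro x hx
          rcases Finset.mem_insert.1 hx with rfl | hx
          · exact ha
          · rwa [Finset.mem_singleton.1 hx]
        · exact ⟨a, Finset.mem_insert_self _ _⟩
      obtain ⟨m', hm', hsupp', hbound'⟩ := ih T' hssub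
        (fun x hx y hy => hclique x (Finset.mem_sdiff.1 hx).1 y (Finset.mem_sdiff.1 hy).1)
      have hadj : G.Adj a b := hclique a ha b hb hab
      have habT' : ∀ v, v ∈ s(a, b) → v ∉ T' := by
        intro v hv hvT'
        have := (Finset.mem_sdiff.1 hvT').2
        rcases Sym2.mem_iff.1 hv with rfl | rfl
        · exact this (Finset.mem_insert_self _ _)
        · exact this (Finset.mem_insert_of_mem (Finset.mem_singleton_self _))
      have hnotmem : s(a, b) ∉ m' := by
        intro h
        exact habT' a (Sym2.mem_mk_left a b) (hsupp' _ h a (Sym2.mem_mk_left a b))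
      refine ⟨insert s(a, b) m', ⟨?_, ?_⟩, ?_, ?_⟩
      · intro e he
        rcases Finset.mem_insert.1 he with rfl | he
        · exact hadj
        · exact hm'.1 he
      · intro e he f hf hne v hv
        rcases Finset.mem_insert.1 he with rfl | he' <;> rcases Finset.mem_insert.1 hf with rfl | hf'
        · exact hne rfl
        · exact habT' v hv.1 (hsupp' f hf' v hv.2)
        · exact habT' v hv.2 (hsupp' e he' v hv.1)
        · exact hm'.2 e he' f hf' hne v hv
      · intro e he v hv
        rcases Finset.mem_insert.1 he with rfl | he
        · rcases Sym2.mem_iff.1 hv with rfl | rfl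
          · exact ha
          · exact hb
        · exact (Finset.mem_sdiff.1 (hsupp' e he v hv)).1
      · have hcardT : T'.card + 2 = T.card := by
          have hsub : ({a, b} : Finset V) ⊆ T := by
            intro x hx
            rcases Finset.mem_insert.1 hx with rfl | hx
            · exact ha
            · rwa [Finset.mem_singleton.1 hx]
          have : ({a, b} : Finset V).card = 2 := by
            rw [Finset.card_insert_of_notMem (by simpa using hab)]; simp
          rw [hT'def, Finset.card_sdiff_of_subset hsub, this]
          have : 2 ≤ T.card := h1
          omega
        rw [Finset.card_insert_of_notMem hnotmem]
        omega

lemma matNum_le_induce_compl_add [Fintype V] (G : SimpleGraph V) (S : Set V) :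
    matNum G ≤ matNum (G.induce Sᶜ) + S.ncard := by
  classical
  obtain ⟨m, hm, hcard⟩ := exists_max_matching G
  set m_in := m.filter (fun e => ∀ v ∈ e, v ∈ Sᶜ) with hmin
  set m_hit := m.filter (fun e => ¬ ∀ v ∈ e, v ∈ Sᶜ) with hmhit
  have h_in : IsMatchingFinset G m_in := hm.subset (Finset.filter_subset _ _)
  have h_in_le : m_in.card ≤ matNum (G.induce Sᶜ) :=
    matchingOn_le h_in (fun e he => (Finset.mem_filter.1 he).2)
  have h_hit_le : m_hit.card ≤ S.ncard := by
    rw [Set.ncard_eq_toFinset_card' S]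
    have hch : ∀ e ∈ m_hit, ∃ v, v ∈ e ∧ v ∈ S := by
      intro e he
      have := (Finset.mem_filter.1 he).2
      push_neg at this
      obtain ⟨v, hv, hvS⟩ := this
      exact ⟨v, hv, by simpa using hvS⟩
    set f : Sym2 V → V := fun e =>
      if h : ∃ v, v ∈ e ∧ v ∈ S then h.choose else (sym2_exists_mem e).choose with hfdef
    have hfspec : ∀ e ∈ m_hit, f e ∈ e ∧ f e ∈ S := by
      intro e he
      have h : ∃ v, v ∈ e ∧ v ∈ S := hch e he
      simp only [hfdef, dif_pos h]
      exact h.choose_spec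
    apply Finset.card_le_card_of_injOn f
    · intro e he
      rw [Finset.mem_coe, Set.mem_toFinset]
      exact (hfspec e he).2
    · intro e₁ h₁ e₂ h₂ heq
      by_contra hne
      have hv₁ : f e₁ ∈ e₁ := (hfspec e₁ h₁).1
      have hv₂ : f e₁ ∈ e₂ := heq ▸ (hfspec e₂ h₂).1
      exact hm.2 e₁ (Finset.filter_subset _ _ h₁) e₂ (Finset.filter_subset _ _ h₂) hne
        (f e₁) ⟨hv₁, hv₂⟩
  have hsum : m_in.card + m_hit.card = m.card := by
    rw [hmin, hmhit]
    exact Finset.card_filter_add_card_filter_not _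
  omega


lemma matNum_mono [Fintype V] {G H : SimpleGraph V} (h : G ≤ H) :
    matNum G ≤ matNum H := by
  obtain ⟨m, hm, hcard⟩ := exists_max_matching G
  rw [← hcard]
  refine card_le_matNum ⟨?_, hm.2⟩
  intro e he
  obtain ⟨a, b, rfl⟩ := sym2_eq e
  exact h (hm.1 he)

lemma mem_edgeSet_map {G : SimpleGraph V} (f : V ↪ W) (e : Sym2 W) :
    e ∈ (G.map f).edgeSet ↔ ∃ e₀ ∈ G.edgeSet, Sym2.map f e₀ = e := by
  constructor
  · intro he
    obtain ⟨a, b, rfl⟩ := sym2_eq e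
    rw [SimpleGraph.mem_edgeSet, SimpleGraph.map_adj] at he
    obtain ⟨p, q, hpq, hp, hq⟩ := he
    exact ⟨s(p, q), hpq, by rw [Sym2.map_pair_eq, hp, hq]⟩
  · rintro ⟨e₀, he₀, rfl⟩
    obtain ⟨p, q, rfl⟩ := sym2_eq e₀
    rw [Sym2.map_pair_eq, SimpleGraph.mem_edgeSet, SimpleGraph.map_adj]
    exact ⟨p, q, he₀, rfl, rfl⟩

lemma edgeCount_map [Fintype V] {G : SimpleGraph V} (f : V ↪ W) :
    edgeCount (G.map f) = edgeCount G := by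
  have hset : (G.map f).edgeSet = (Sym2.map f) '' G.edgeSet := by
    ext e
    rw [mem_edgeSet_map f e]
    simp [Set.mem_image]
  rw [edgeCount, edgeCount, hset]
  exact Set.ncard_image_of_injective _ (Sym2.map.injective f.injective)

lemma matNum_map [Fintype V] [Fintype W] {G : SimpleGraph V} (f : V ↪ W) :
    matNum (G.map f) = matNum G := by
  classical
  apply le_antisymm
  · obtain ⟨m', hm', hcard⟩ := exists_max_matching (G.map f)
    rcases Finset.eq_empty_or_nonempty m' with rfl | ⟨e₁, he₁⟩
    · simp only [← hcard, Finset.card_empty]; omega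
    have hedge₁ := hm'.1 he₁
    obtain ⟨ed, hed, -⟩ := (mem_edgeSet_map f e₁).1 hedge₁
    set h : Sym2 W → Sym2 V := fun e =>
      if hh : ∃ e₀ ∈ G.edgeSet, Sym2.map f e₀ = e then hh.choose else ed with hhdef
    have hspec : ∀ e ∈ m', h e ∈ G.edgeSet ∧ Sym2.map f (h e) = e := by
      intro e he
      have hh : ∃ e₀ ∈ G.edgeSet, Sym2.map f e₀ = e := (mem_edgeSet_map f e).1 (hm'.1 he)
      simp only [hhdef, dif_pos hh]
      exact ⟨hh.choose_spec.1, hh.choose_spec.2⟩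
    have key := matching_image (G := G.map f) (H := G) hm' h ?_ ?_ ?_
    · rw [← hcard, ← key.2]
      exact card_le_matNum key.1
    · intro e he; exact (hspec e he).1
    · intro e₁' h₁ e₂' h₂ hne v hv
      have h1 : f v ∈ e₁' := by
        rw [← (hspec e₁' h₁).2]
        exact Sym2.mem_map.2 ⟨v, hv.1, rfl⟩
      have h2 : f v ∈ e₂' := by
        rw [← (hspec e₂' h₂).2]
        exact Sym2.mem_map.2 ⟨v, hv.2, rfl⟩
      exact hm'.2 e₁' h₁ e₂' h₂ hne (f v) ⟨h1, h2⟩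
    · intro e₁' h₁ e₂' h₂ heq
      have := congrArg (Sym2.map f) heq
      rwa [(hspec e₁' (by exact_mod_cast h₁)).2, (hspec e₂' (by exact_mod_cast h₂)).2] at this
  · obtain ⟨m, hm, hcard⟩ := exists_max_matching G
    have key := matching_map (H := G.map f) hm f ?_ ?_
    · rw [← hcard, ← key.2]
      exact card_le_matNum key.1
    · intro e he
      exact (mem_edgeSet_map f _).2 ⟨e, hm.1 he, rfl⟩
    · intro e₁ _ e₂ _ v₁ _ v₂ _ heq
      exact f.injective heq

lemma indNum_map [Fintype V] [Fintype W] {G : SimpleGraph V} (f : V ↪ W) :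
    indNum (G.map f) = indNum G + (Fintype.card W - Fintype.card V) := by
  classical
  have hcardim : (Finset.univ.image f).card = Fintype.card V := by
    rw [Finset.card_image_of_injective _ f.injective, Finset.card_univ]
  have hcardVW : Fintype.card V ≤ Fintype.card W := Fintype.card_le_of_embedding f
  apply le_antisymm
  · obtain ⟨t, ht, hcard⟩ := exists_max_indep (G.map f)
    set s : Finset V := Finset.univ.filter (fun v => f v ∈ t) with hsdef
    have hsind : ∀ x ∈ s, ∀ y ∈ s, ¬ G.Adj x y := by
      intro x hx y hy hadj
      exact ht (f x) ((Finset.mem_filter.1 hx).2) (f y) ((Finset.mem_filter.1 hy).2)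
        (SimpleGraph.map_adj_apply.2 hadj)
    have himg : s.image f = t ∩ Finset.univ.image f := by
      ext w
      simp only [hsdef, Finset.mem_image, Finset.mem_filter, Finset.mem_univ, true_and,
        Finset.mem_inter]
      constructor
      · rintro ⟨v, hv, rfl⟩; exact ⟨hv, ⟨v, rfl⟩⟩
      · rintro ⟨hw, v, rfl⟩; exact ⟨v, hw, rfl⟩
    have hs_le : (t ∩ Finset.univ.image f).card ≤ indNum G := by
      rw [← himg, Finset.card_image_of_injective _ f.injective]
      exact card_le_indNum hsind
    have hsplit : t.card = (t ∩ Finset.univ.image f).card + (t \ Finset.univ.image f).card :=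
      (Finset.card_inter_add_card_sdiff t _).symm
    have hout : (t \ Finset.univ.image f).card ≤ Fintype.card W - Fintype.card V := by
      have hsub : t \ Finset.univ.image f ⊆ Finset.univ \ Finset.univ.image f :=
        Finset.sdiff_subset_sdiff (Finset.subset_univ t) (le_refl _)
      have := Finset.card_le_card hsub
      rwa [Finset.card_sdiff_of_subset (Finset.subset_univ _), Finset.card_univ, hcardim] at this
    omega
  · obtain ⟨s, hs, hcard⟩ := exists_max_indep G
    set t : Finset W := s.image f ∪ (Finset.univ \ Finset.univ.image f) with htdef
    have htind : ∀ x ∈ t, ∀ y ∈ t, ¬ (G.map f).Adj x y := by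
      intro x hx y hy hadj
      rw [SimpleGraph.map_adj] at hadj
      obtain ⟨p, q, hpq, hp, hq⟩ := hadj
      have hx' : x ∈ Finset.univ.image f :=
        Finset.mem_image.2 ⟨p, Finset.mem_univ p, hp⟩
      have hy' : y ∈ Finset.univ.image f :=
        Finset.mem_image.2 ⟨q, Finset.mem_univ q, hq⟩
      have hxs : x ∈ s.image f := by
        rcases Finset.mem_union.1 hx with h | h
        · exact h
        · exact absurd hx' (Finset.mem_sdiff.1 h).2
      have hys : y ∈ s.image f := by
        rcases Finset.mem_union.1 hy with h | h
        · exact h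
        · exact absurd hy' (Finset.mem_sdiff.1 h).2
      obtain ⟨p', hp', hpx⟩ := Finset.mem_image.1 hxs
      obtain ⟨q', hq', hqy⟩ := Finset.mem_image.1 hys
      have : p = p' := f.injective (by rw [hp, ← hpx])
      have hq2 : q = q' := f.injective (by rw [hq, ← hqy])
      exact hs p' hp' q' hq' (this ▸ hq2 ▸ hpq)
    have hdisj : Disjoint (s.image f) (Finset.univ \ Finset.univ.image f) := by
      rw [Finset.disjoint_left]
      intro w hw hw'
      exact (Finset.mem_sdiff.1 hw').2 (Finset.image_subset_image (Finset.subset_univ s) hw)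
    have htcard : t.card = s.card + (Fintype.card W - Fintype.card V) := by
      rw [htdef, Finset.card_union_of_disjoint hdisj,
        Finset.card_image_of_injective _ f.injective,
        Finset.card_sdiff_of_subset (Finset.subset_univ _), Finset.card_univ, hcardim]
    calc indNum G + (Fintype.card W - Fintype.card V) = t.card := by rw [htcard, hcard]
      _ ≤ indNum (G.map f) := card_le_indNum htind


lemma edgeCount_addEdge [Fintype V] {G : SimpleGraph V} {x y : V} (hxy : x ≠ y)
    (hnadj : ¬ G.Adj x y) :
    edgeCount (G ⊔ SimpleGraph.fromEdgeSet {s(x, y)}) = edgeCount G + 1 := by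
  classical
  have hsd : ({s(x, y)} : Set (Sym2 V)) \ {e | e.IsDiag} = {s(x, y)} := by
    ext e
    simp only [Set.mem_diff, Set.mem_singleton_iff, Set.mem_setOf_eq]
    constructor
    · exact fun h => h.1
    · rintro rfl
      exact ⟨rfl, by simp [Sym2.mk_isDiag_iff, hxy]⟩
  have h1 : (G ⊔ SimpleGraph.fromEdgeSet {s(x, y)}).edgeSet = insert s(x, y) G.edgeSet := by
    rw [SimpleGraph.edgeSet_sup, SimpleGraph.edgeSet_fromEdgeSet, show Sym2.diagSet = {e : Sym2 V | e.IsDiag} from rfl, hsd, Set.union_singleton]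
  rw [edgeCount, edgeCount, h1,
    Set.ncard_insert_of_notMem (by rwa [SimpleGraph.mem_edgeSet]) (Set.toFinite _)]

lemma matNum_addEdge [Fintype V] {G : SimpleGraph V} {x y : V}
    (hlt : matNum (G.induce {v | v ≠ x ∧ v ≠ y}) < matNum G) :
    matNum (G ⊔ SimpleGraph.fromEdgeSet {s(x, y)}) = matNum G := by
  classical
  refine le_antisymm ?_ (matNum_mono le_sup_left)
  obtain ⟨m, hm, hcard⟩ := exists_max_matching (G ⊔ SimpleGraph.fromEdgeSet {s(x, y)})
  rw [← hcard]
  have hedge : ∀ e ∈ m, e ≠ s(x, y) → e ∈ G.edgeSet := by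
    intro e he hne
    have h := hm.1 he
    rw [SimpleGraph.edgeSet_sup] at h
    rcases h with h | h
    · exact h
    · rw [SimpleGraph.edgeSet_fromEdgeSet] at h
      exact absurd h.1 (by simpa using hne)
  by_cases hmem : s(x, y) ∈ m
  · set m' := m.erase s(x, y) with hm'def
    have hm'sub : m' ⊆ m := Finset.erase_subset _ _
    have hm'G : IsMatchingFinset G m' :=
      ⟨fun e he => hedge e (hm'sub he) (Finset.ne_of_mem_erase he),
       fun e he f hf => hm.2 e (hm'sub he) f (hm'sub hf)⟩
    have hsupp : ∀ e ∈ m', ∀ v ∈ e, v ∈ {v | v ≠ x ∧ v ≠ y} := by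
      intro e he v hv
      constructor
      · rintro rfl
        exact hm.2 e (hm'sub he) s(v, y) hmem (Finset.ne_of_mem_erase he) v
          ⟨hv, Sym2.mem_mk_left v y⟩
      · rintro rfl
        exact hm.2 e (hm'sub he) s(x, v) hmem (Finset.ne_of_mem_erase he) v
          ⟨hv, Sym2.mem_mk_right x v⟩
    have hle := matchingOn_le hm'G hsupp
    have hpos : 0 < m.card := Finset.card_pos.2 ⟨_, hmem⟩
    have hcard' : m'.card = m.card - 1 := Finset.card_erase_of_mem hmem
    omega
  · exact card_le_matNum
      ⟨fun e he => hedge e he (by rintro rfl; exact hmem he), hm.2⟩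

lemma prop_P {α ν : ℕ} [Fintype V] {G : SimpleGraph V}
    (hext : EdgeExtremal G α ν) {x y : V} (hxy : x ≠ y) (hnadj : ¬ G.Adj x y) :
    matNum (G.induce {v | v ≠ x ∧ v ≠ y}) = matNum G := by
  classical
  obtain ⟨hα, hν', hmax⟩ := hext
  by_contra hne
  have hlt : matNum (G.induce {v | v ≠ x ∧ v ≠ y}) < matNum G :=
    lt_of_le_of_ne (matNum_induce_le G _) hne
  set G' := G ⊔ SimpleGraph.fromEdgeSet {s(x, y)} with hG'
  have hνG' : matNum G' = ν := by rw [hG', matNum_addEdge hlt, hν']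
  have hαG' : indNum G' ≤ α := by
    obtain ⟨t, ht, hcard⟩ := exists_max_indep G'
    have htG : ∀ a ∈ t, ∀ b ∈ t, ¬ G.Adj a b := by
      intro a ha b hb hadj
      exact ht a ha b hb ((SimpleGraph.sup_adj _ _ _ _).2 (Or.inl hadj))
    calc indNum G' = t.card := hcard.symm
      _ ≤ indNum G := card_le_indNum htG
      _ = α := hα
  set k := α - indNum G' with hk
  set n := Fintype.card V with hn
  set f : V ↪ Fin (n + k) :=
    (Fintype.equivFin V).toEmbedding.trans (Fin.castLEEmb (Nat.le_add_right n k))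
    with hf
  set H := G'.map f with hH
  have hWV : Fintype.card (Fin (n + k)) - Fintype.card V = k := by
    simp [hn]
  have hαH : indNum H = α := by
    rw [hH, indNum_map, hWV]
    omega
  have hνH : matNum H = ν := by rw [hH, matNum_map, hνG']
  have hcount : edgeCount H = edgeCount G + 1 := by
    rw [hH, edgeCount_map, hG', edgeCount_addEdge hxy hnadj]
  have := hmax (Fin (n + k)) H hαH hνH
  omega


theorem main (α ν : ℕ) (hα : 0 < α) (hν : 0 < ν)
    {V : Type*} [Fintype V] (G : SimpleGraph V)
    (hext : EdgeExtremal G α ν)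
    (S : Set V) (hS : S = {v : V | matNum (G.induce {u | u ≠ v}) = matNum G - 1}) :
    matNum (G.induce Sᶜ) = ν - S.ncard := by
  classical
  have hνG : matNum G = ν := hext.2.1
  have hmem : ∀ v : V, v ∈ S ↔ matNum (G.induce {u | u ≠ v}) = ν - 1 := by
    intro v
    rw [hS]
    simp [Set.mem_setOf_eq, hνG]
  -- F1 : essential vertices are universal
  have F1 : ∀ v ∈ S, ∀ w : V, w ≠ v → G.Adj v w := by
    intro v hv w hw
    by_contra hnadj
    have hP := prop_P hext (Ne.symm hw) hnadj
    have hsub : {u : V | u ≠ v ∧ u ≠ w} ⊆ {u : V | u ≠ v} := fun u hu => hu.1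
    have h1 : matNum (G.induce {u | u ≠ v ∧ u ≠ w}) ≤ matNum (G.induce {u | u ≠ v}) :=
      matNum_induce_mono G hsub
    rw [hP, hνG, (hmem v).1 hv] at h1
    omega
  -- max matching of G - S
  obtain ⟨m₀, hm₀, hsupp₀, hcard₀⟩ := exists_matchingOn G Sᶜ
  set Sfin := S.toFinset with hSfin
  have hncard : S.ncard = Sfin.card := Set.ncard_eq_toFinset_card' S
  set X := suppFin m₀ with hX
  have hXcard : X.card = 2 * m₀.card := card_suppFin m₀ hm₀
  have hXS : ∀ u ∈ X, u ∉ Sfin := by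
    intro u hu hus
    obtain ⟨e, he, hue⟩ := mem_suppFin.1 hu
    exact (hsupp₀ e he u hue) (Set.mem_toFinset.1 hus)
  set F := (Finset.univ \ Sfin) \ X with hF
  have hFnotS : ∀ u ∈ F, u ∉ S := by
    intro u hu
    have := (Finset.mem_sdiff.1 (Finset.mem_sdiff.1 hu).1).2
    exact fun h => this (Set.mem_toFinset.2 h)
  have hFnotX : ∀ u ∈ F, u ∉ X := fun u hu => (Finset.mem_sdiff.1 hu).2
  have hFcard : F.card + Sfin.card + 2 * m₀.card = (Fintype.card V) := by
    have hXsub : X ⊆ Finset.univ \ Sfin := by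
      intro u hu
      exact Finset.mem_sdiff.2 ⟨Finset.mem_univ u, hXS u hu⟩
    rw [hF, Finset.card_sdiff_of_subset hXsub, Finset.card_sdiff_of_subset (Finset.subset_univ _),
      Finset.card_univ, hXcard]
    have h1 : Sfin.card ≤ (Fintype.card V) := by
      rw [← Finset.card_univ]; exact Finset.card_le_card (Finset.subset_univ _)
    have h2 : X.card ≤ (Finset.univ \ Sfin).card := Finset.card_le_card hXsub
    rw [Finset.card_sdiff_of_subset (Finset.subset_univ _), Finset.card_univ, hXcard] at h2
    omega
  have hsuppX : ∀ e ∈ m₀, ∀ u ∈ e, u ∈ X := by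
    intro e he u hu
    exact mem_suppFin.2 ⟨e, he, hu⟩
  rcases le_or_gt Sfin.card F.card with hc | hc
  -- Case A : enough free vertices
  · obtain ⟨F', hF'sub, hF'card⟩ := Finset.exists_subset_card_eq hc
    have hcards : Fintype.card ↥Sfin = Fintype.card ↥F' := by
      rw [Fintype.card_coe, Fintype.card_coe, hF'card]
    set φ := Fintype.equivOfCardEq hcards with hφ
    set newm : Finset (Sym2 V) :=
      Sfin.attach.image (fun v : ↥Sfin => s((v : V), ((φ v : ↥F') : V))) with hnewm
    have hSS : ∀ v : ↥Sfin, (v : V) ∈ S := fun v => Set.mem_toFinset.1 v.2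
    have hφF : ∀ v : ↥Sfin, ((φ v : ↥F') : V) ∈ F := fun v => hF'sub (φ v).2
    have hφne : ∀ v : ↥Sfin, ((φ v : ↥F') : V) ≠ (v : V) := by
      intro v h
      exact hFnotS _ (hφF v) (h ▸ hSS v)
    have hmemnew : ∀ e ∈ newm, ∃ v : ↥Sfin, e = s((v : V), ((φ v : ↥F') : V)) := by
      intro e he
      obtain ⟨v, -, rfl⟩ := Finset.mem_image.1 he
      exact ⟨v, rfl⟩
    have hnewmatch : IsMatchingFinset G newm := by
      constructor
      · intro e he
        obtain ⟨v, rfl⟩ := hmemnew e (by exact_mod_cast he)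
        exact F1 (v : V) (hSS v) _ (hφne v)
      · intro e he f hf hne u hu
        obtain ⟨v, rfl⟩ := hmemnew e he
        obtain ⟨w, rfl⟩ := hmemnew f hf
        have hvw : (v : V) ≠ (w : V) := by
          intro h
          exact hne (by rw [Subtype.ext h])
        rcases Sym2.mem_iff.1 hu.1 with rfl | rfl <;> rcases Sym2.mem_iff.1 hu.2 with h2 | h2
        · exact hvw h2
        · exact hFnotS _ (h2 ▸ hφF w) (hSS v)
        · exact hFnotS _ (hφF v) (h2 ▸ hSS w)
        · have : φ v = φ w := Subtype.ext h2
          exact hvw (congrArg _ (φ.injective this))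
    have hnewcard : newm.card = Sfin.card := by
      have hinj : Set.InjOn (fun v : ↥Sfin => s((v : V), ((φ v : ↥F') : V)))
          ↑Sfin.attach := by
        intro v _ w _ heq
        simp only at heq
        rcases Sym2.eq_iff.1 heq with ⟨h1, -⟩ | ⟨h1, h2⟩
        · exact Subtype.ext h1
        · exact absurd (h1 ▸ hSS v) (hFnotS _ (hφF w))
      rw [hnewm, Finset.card_image_of_injOn hinj, Finset.card_attach]
    have hdisj : ∀ e₁ ∈ m₀, ∀ e₂ ∈ newm, ∀ u : V, ¬(u ∈ e₁ ∧ u ∈ e₂) := by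
      intro e₁ h₁ e₂ h₂ u hu
      obtain ⟨v, rfl⟩ := hmemnew e₂ h₂
      have huX : u ∈ X := hsuppX e₁ h₁ u hu.1
      rcases Sym2.mem_iff.1 hu.2 with rfl | rfl
      · exact (hXS _ huX) v.2
      · exact hFnotX _ (hφF v) huX
    obtain ⟨hbig, hbigcard⟩ := matching_union hm₀ hnewmatch hdisj
    have hle : (m₀ ∪ newm).card ≤ ν := by rw [← hνG]; exact card_le_matNum hbig
    rw [hbigcard, hnewcard] at hle
    have hlow := matNum_le_induce_compl_add G S
    rw [hνG] at hlow
    omega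
  -- Case B : few free vertices
  · obtain ⟨S₁, hS₁sub, hS₁card⟩ := Finset.exists_subset_card_eq hc.le
    have hcards : Fintype.card ↥F = Fintype.card ↥S₁ := by
      rw [Fintype.card_coe, Fintype.card_coe, hS₁card]
    set φ := Fintype.equivOfCardEq hcards with hφ
    have hS₁S : ∀ u ∈ S₁, u ∈ S := fun u hu => Set.mem_toFinset.1 (hS₁sub hu)
    have hφS : ∀ u : ↥F, ((φ u : ↥S₁) : V) ∈ S := fun u => hS₁S _ (φ u).2
    have hφne : ∀ u : ↥F, (u : V) ≠ ((φ u : ↥S₁) : V) := by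
      intro u h
      exact hFnotS _ u.2 (h ▸ hφS u)
    set e₁m : Finset (Sym2 V) :=
      F.attach.image (fun u : ↥F => s((u : V), ((φ u : ↥S₁) : V))) with he₁m
    have hmeme₁ : ∀ e ∈ e₁m, ∃ u : ↥F, e = s((u : V), ((φ u : ↥S₁) : V)) := by
      intro e he
      obtain ⟨u, -, rfl⟩ := Finset.mem_image.1 he
      exact ⟨u, rfl⟩
    have he₁match : IsMatchingFinset G e₁m := by
      constructor
      · intro e he
        obtain ⟨u, rfl⟩ := hmeme₁ e (by exact_mod_cast he)
        exact (F1 _ (hφS u) _ (hφne u)).symm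
      · intro e he f hf hne u hu
        obtain ⟨v, rfl⟩ := hmeme₁ e he
        obtain ⟨w, rfl⟩ := hmeme₁ f hf
        have hvw : (v : V) ≠ (w : V) := by
          intro h
          exact hne (by rw [Subtype.ext h])
        rcases Sym2.mem_iff.1 hu.1 with rfl | rfl <;> rcases Sym2.mem_iff.1 hu.2 with h2 | h2
        · exact hvw h2
        · exact hFnotS _ v.2 (h2 ▸ hφS w)
        · exact hFnotS _ (h2 ▸ w.2) (hφS v)
        · have : φ v = φ w := Subtype.ext h2
          exact hvw (congrArg _ (φ.injective this))
    have he₁card : e₁m.card = F.card := by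
      have hinj : Set.InjOn (fun u : ↥F => s((u : V), ((φ u : ↥S₁) : V)))
          ↑F.attach := by
        intro v _ w _ heq
        simp only at heq
        rcases Sym2.eq_iff.1 heq with ⟨h1, -⟩ | ⟨h1, h2⟩
        · exact Subtype.ext h1
        · exact absurd (h1 ▸ (v.2 : (v : V) ∈ F)) (fun hh => hFnotS _ hh (hφS w))
      rw [he₁m, Finset.card_image_of_injOn hinj, Finset.card_attach]
    -- pairing inside Sfin \ S₁
    have hcliq : ∀ x ∈ Sfin \ S₁, ∀ y ∈ Sfin \ S₁, x ≠ y → G.Adj x y := by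
      intro x hx y hy hxy
      exact F1 x (Set.mem_toFinset.1 (Finset.mem_sdiff.1 hx).1) y (Ne.symm hxy)
    obtain ⟨m₂, hm₂, hsupp₂, hbound₂⟩ := clique_matching (Sfin \ S₁) hcliq
    have hsupp₂S : ∀ e ∈ m₂, ∀ u ∈ e, u ∈ S ∧ u ∉ S₁ := by
      intro e he u hu
      have := hsupp₂ e he u hu
      exact ⟨Set.mem_toFinset.1 (Finset.mem_sdiff.1 this).1, (Finset.mem_sdiff.1 this).2⟩
    -- union of the three matchings
    have hdisj₁ : ∀ e₁ ∈ m₀, ∀ e₂ ∈ e₁m, ∀ u : V, ¬(u ∈ e₁ ∧ u ∈ e₂) := by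
      intro e₁ h₁ e₂ h₂ u hu
      obtain ⟨v, rfl⟩ := hmeme₁ e₂ h₂
      have huX : u ∈ X := hsuppX e₁ h₁ u hu.1
      rcases Sym2.mem_iff.1 hu.2 with rfl | rfl
      · exact hFnotX _ v.2 huX
      · exact hsupp₀ e₁ h₁ _ hu.1 (hφS v)
    obtain ⟨hbigA, hbigAcard⟩ := matching_union hm₀ he₁match hdisj₁
    have hdisj₂ : ∀ e₁ ∈ m₀ ∪ e₁m, ∀ e₂ ∈ m₂, ∀ u : V, ¬(u ∈ e₁ ∧ u ∈ e₂) := by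
      intro e₁ h₁ e₂ h₂ u hu
      have huS : u ∈ S ∧ u ∉ S₁ := hsupp₂S e₂ h₂ u hu.2
      rcases Finset.mem_union.1 h₁ with h₁' | h₁'
      · exact hsupp₀ e₁ h₁' u hu.1 huS.1
      · obtain ⟨v, rfl⟩ := hmeme₁ e₁ h₁'
        rcases Sym2.mem_iff.1 hu.1 with rfl | rfl
        · exact hFnotS _ v.2 huS.1
        · exact huS.2 (φ v).2
    obtain ⟨hbigB, hbigBcard⟩ := matching_union hbigA hm₂ hdisj₂
    have hle : (m₀ ∪ e₁m ∪ m₂).card ≤ ν := by rw [← hνG]; exact card_le_matNum hbigB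
    rw [hbigBcard, hbigAcard, he₁card] at hle
    have hTcard : (Sfin \ S₁).card = Sfin.card - F.card := by
      rw [Finset.card_sdiff_of_subset hS₁sub, hS₁card]
    rw [hTcard] at hbound₂
    -- 2ν ≥ (Fintype.card V) - 1 and 2ν ≤ (Fintype.card V)
    have h2νn : 2 * ν ≤ (Fintype.card V) := by rw [← hνG]; exact two_mul_matNum_le G
    have hbig : (Fintype.card V) ≤ 2 * ν + 1 := by omega
    rcases (by omega : 2 * ν = (Fintype.card V) ∨ 2 * ν = (Fintype.card V) - 1 ∧ (Fintype.card V) = 2 * ν + 1) with heven | ⟨hodd, hodd'⟩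
    -- (Fintype.card V) even : every vertex essential
    · have hall : ∀ v : V, v ∈ S := by
        intro v
        rw [hmem v]
        have hub : matNum (G.induce {u | u ≠ v}) ≤ ν - 1 := by
          obtain ⟨m', hm', hsupp', hcard'⟩ := exists_matchingOn G {u | u ≠ v}
          have hsub : suppFin m' ⊆ Finset.univ.erase v := by
            intro u hu
            obtain ⟨e, he, hue⟩ := mem_suppFin.1 hu
            exact Finset.mem_erase.2 ⟨hsupp' e he u hue, Finset.mem_univ u⟩
          have h1 : (suppFin m').card ≤ (Fintype.card V) - 1 := by
            have := Finset.card_le_card hsub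
            rwa [Finset.card_erase_of_mem (Finset.mem_univ v), Finset.card_univ] at this
          rw [card_suppFin m' hm'] at h1
          omega
        have hlb := matNum_le_del_add_one G v
        rw [hνG] at hlb
        omega
      have hSuniv : S = Set.univ := Set.eq_univ_of_forall hall
      have hm₀empty : m₀ = ∅ := by
        by_contra hne
        obtain ⟨e, he⟩ := Finset.nonempty_of_ne_empty hne
        obtain ⟨u, hu⟩ := sym2_exists_mem e
        exact (hsupp₀ e he u hu) (hall u)
      have hmS0 : matNum (G.induce Sᶜ) = 0 := by
        rw [← hcard₀, hm₀empty, Finset.card_empty]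
      rw [hmS0, hSuniv, Set.ncard_univ, Nat.card_eq_fintype_card]
      omega
    -- (Fintype.card V) odd : contradiction
    · exfalso
      have hSne : Sfin.Nonempty := Finset.card_pos.1 (by omega)
      obtain ⟨v₀, hv₀⟩ := hSne
      have hv₀S : v₀ ∈ S := Set.mem_toFinset.1 hv₀
      have hcomplete : ∀ x y : V, x ≠ y → G.Adj x y := by
        intro x y hxy
        by_contra hnadj
        have hP := prop_P hext hxy hnadj
        obtain ⟨m', hm', hsupp', hcard'⟩ := exists_matchingOn G {u | u ≠ x ∧ u ≠ y}
        have hsub : suppFin m' ⊆ (Finset.univ.erase x).erase y := by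
          intro u hu
          obtain ⟨e, he, hue⟩ := mem_suppFin.1 hu
          have := hsupp' e he u hue
          exact Finset.mem_erase.2 ⟨this.2, Finset.mem_erase.2 ⟨this.1, Finset.mem_univ u⟩⟩
        have h1 : (suppFin m').card ≤ (Fintype.card V) - 2 := by
          have h2 := Finset.card_le_card hsub
          rw [Finset.card_erase_of_mem (Finset.mem_erase.2 ⟨Ne.symm hxy, Finset.mem_univ y⟩),
            Finset.card_erase_of_mem (Finset.mem_univ x), Finset.card_univ] at h2
          omega
        rw [card_suppFin m' hm', hcard', hP, hνG] at h1
        omega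
      have hcliq₂ : ∀ x ∈ Finset.univ.erase v₀, ∀ y ∈ Finset.univ.erase v₀, x ≠ y → G.Adj x y :=
        fun x _ y _ hxy => hcomplete x y hxy
      obtain ⟨m₃, hm₃, hsupp₃, hbound₃⟩ := clique_matching (Finset.univ.erase v₀) hcliq₂
      have hecard : (Finset.univ.erase v₀).card = (Fintype.card V) - 1 := by
        rw [Finset.card_erase_of_mem (Finset.mem_univ v₀), Finset.card_univ]
      rw [hecard] at hbound₃
      have hm₃le : m₃.card ≤ matNum (G.induce {u | u ≠ v₀}) :=
        matchingOn_le hm₃ (fun e he u hu => Finset.mem_erase.1 (hsupp₃ e he u hu) |>.1)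
      rw [(hmem v₀).1 hv₀S] at hm₃le
      omega

end Aux

/-- If `G` is edge-extremal for `(α, ν)` and `S_G` is the set of vertices
covered by every maximum matching, then `ν(G \ S_G) = ν - |S_G|`. -/
theorem extremal_matNum_of_delete_essential (α ν : ℕ) (hα : 0 < α) (hν : 0 < ν)
    {V : Type*} [Fintype V] (G : SimpleGraph V)
    (hext : EdgeExtremal G α ν)
    (S : Set V) (hS : S = {v : V | matNum (G.induce {u | u ≠ v}) = matNum G - 1}) :
    matNum (G.induce Sᶜ) = ν - S.ncard := by
  exact Aux.main α ν hα hν G hext S hS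
end
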